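/- arXiv:2405.09103 — 8 statements merged into one kernel-verified Lean document; each statement's English description precedes it below -/
import Mathlib

section
/- Let T > 0. For i = 1,2, let a^i ∈ ℝ, s^i ∈ C[0,T], and let l^i, r^i : [0,T] × ℝ → ℝ satisfy Assumption (A) with the same constants 0 < c < C and l^i(T,a^i) ≤ 0 ≤ r^i(T,a^i). Let (x^i,k^i) be a solution of the backward Skorokhod problem BSP_{l^i}^{r^i}(s^i,a^i). Suppose L̄, R̄ ∈ [0,∞) satisfy |l¹(t,x) − l²(t,x)| ≤ L̄ and |r¹(t,x) − r²(t,x)| ≤ R̄ for all (t,x) ∈ [0,T] × ℝ. Then sup_{t∈[0,T]} |k¹(t) − k²(t)| ≤ 2(C/c)|a¹ − a²| + 4(C/c) sup_{t∈[0,T]} |s¹(t) − s²(t)| + (2/c) max(L̄, R̄). -/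
open MeasureTheory Set

/-- `I[0,T]`: continuous nondecreasing functions on `[0,T]` vanishing at `0`,
encoded as their constant extension to all of `ℝ`. -/
structure IFun (T : ℝ) where
  toFun : ℝ → ℝ
  mono : Monotone toFun
  cont : Continuous toFun
  zero_left : ∀ t ≤ (0 : ℝ), toFun t = 0
  const_right : ∀ t, T ≤ t → toFun t = toFun T

/-- The Stieltjes function associated with an element of `I[0,T]`. -/
noncomputable def IFun.stieltjes {T : ℝ} (k : IFun T) : StieltjesFunction ℝ where
  toFun := k.toFun
  mono' := k.mono
  right_continuous' := fun _ => k.cont.continuousAt.continuousWithinAt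

/-- The Lebesgue–Stieltjes measure induced by an element of `I[0,T]`. -/
noncomputable def IFun.measure {T : ℝ} (k : IFun T) : Measure ℝ := k.stieltjes.measure

/-- Solution of the backward Skorokhod problem `BSP_l^r(s,a)`:
`x(t) = a + s(T) - s(t) + k(T) - k(t)`, the constraints `l(t,x(t)) ≤ 0 ≤ r(t,x(t))`,
and `k = k^r - k^l` with `k^r, k^l ∈ I[0,T]` satisfying the Skorokhod conditions. -/
structure IsBSPSolution (T : ℝ) (l r : ℝ → ℝ → ℝ) (s : ℝ → ℝ) (a : ℝ)
    (x k : ℝ → ℝ) : Prop where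
  x_cont : ContinuousOn x (Icc 0 T)
  k_cont : ContinuousOn k (Icc 0 T)
  k_bv : BoundedVariationOn k (Icc 0 T)
  k_zero : k 0 = 0
  eqn : ∀ t ∈ Icc 0 T, x t = a + s T - s t + (k T - k t)
  lower : ∀ t ∈ Icc 0 T, l t (x t) ≤ 0
  upper : ∀ t ∈ Icc 0 T, 0 ≤ r t (x t)
  decomp : ∃ kr kl : IFun T, (∀ t ∈ Icc 0 T, k t = kr.toFun t - kl.toFun t) ∧
      (∫ t in Icc 0 T, l t (x t) ∂kl.measure) = 0 ∧
      (∫ t in Icc 0 T, r t (x t) ∂kr.measure) = 0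

/-- Assumption (A) on the boundary functions `l ≤ r`, with constants `0 < c < C`. -/
structure AssumptionA (T c C : ℝ) (l r : ℝ → ℝ → ℝ) : Prop where
  l_cont : ∀ x : ℝ, ContinuousOn (fun t => l t x) (Icc 0 T)
  r_cont : ∀ x : ℝ, ContinuousOn (fun t => r t x) (Icc 0 T)
  l_mono : ∀ t ∈ Icc (0 : ℝ) T, StrictMono (l t)
  r_mono : ∀ t ∈ Icc (0 : ℝ) T, StrictMono (r t)
  l_lip : ∀ t ∈ Icc (0 : ℝ) T, ∀ x y : ℝ,
      c * |x - y| ≤ |l t x - l t y| ∧ |l t x - l t y| ≤ C * |x - y|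
  r_lip : ∀ t ∈ Icc (0 : ℝ) T, ∀ x y : ℝ,
      c * |x - y| ≤ |r t x - r t y| ∧ |r t x - r t y| ≤ C * |x - y|
  sep : ∃ δ > (0 : ℝ), ∀ t ∈ Icc (0 : ℝ) T, ∀ x : ℝ, δ ≤ r t x - l t x

open Filter Topology

/-- Joint continuity of `t ↦ r t (x t)` from continuity in `t` for fixed space
variable, uniform Lipschitz continuity in the space variable, and continuity of `x`. -/
lemma compCont (T C : ℝ) (r : ℝ → ℝ → ℝ) (x : ℝ → ℝ)
    (hrc : ∀ y : ℝ, ContinuousOn (fun t => r t y) (Icc 0 T))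
    (hlip : ∀ t ∈ Icc (0:ℝ) T, ∀ a b : ℝ, |r t a - r t b| ≤ C * |a - b|)
    (hx : ContinuousOn x (Icc 0 T)) :
    ContinuousOn (fun t => r t (x t)) (Icc 0 T) := by
  intro v hv
  have hxv : ContinuousWithinAt x (Icc 0 T) v := hx v hv
  have h1 : Tendsto (fun u => r u (x v)) (𝓝[Icc (0:ℝ) T] v) (𝓝 (r v (x v))) :=
    (hrc (x v)) v hv
  have hb' : Tendsto (fun u => C * |x u - x v|) (𝓝[Icc (0:ℝ) T] v)
      (𝓝 (C * |x v - x v|)) :=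
    tendsto_const_nhds.mul ((hxv.sub tendsto_const_nhds).abs)
  have hb : Tendsto (fun u => C * |x u - x v|) (𝓝[Icc (0:ℝ) T] v) (𝓝 0) := by
    simpa using hb'
  have hbneg : Tendsto (fun u => -(C * |x u - x v|)) (𝓝[Icc (0:ℝ) T] v) (𝓝 0) := by
    simpa using hb.neg
  have h2 : Tendsto (fun u => r u (x u) - r u (x v)) (𝓝[Icc (0:ℝ) T] v) (𝓝 0) := by
    apply tendsto_of_tendsto_of_tendsto_of_le_of_le' hbneg hb
    · filter_upwards [self_mem_nhdsWithin] with u hu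
      have h3 := hlip u hu (x u) (x v)
      have h4 := neg_abs_le (r u (x u) - r u (x v))
      linarith
    · filter_upwards [self_mem_nhdsWithin] with u hu
      exact le_trans (le_abs_self _) (hlip u hu (x u) (x v))
  have h5 := h2.add h1
  have h6 : Tendsto (fun u => r u (x u)) (𝓝[Icc (0:ℝ) T] v) (𝓝 (r v (x v))) := by
    simpa using h5
  exact h6

/-- If a nonnegative continuous function has zero integral against the measure
induced by `k ∈ I[0,T]` and is nonvanishing on `Ioc t0 t`, then `k` is constant there. -/
lemma IFun.const_of_integral_zero {T : ℝ} (k : IFun T) (f : ℝ → ℝ)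
    (hint : (∫ t in Icc 0 T, f t ∂k.measure) = 0)
    (hnn : ∀ t ∈ Icc (0:ℝ) T, 0 ≤ f t)
    (hcont : ContinuousOn f (Icc 0 T))
    {t0 t : ℝ} (ht0 : t0 ∈ Icc (0:ℝ) T) (ht : t ∈ Icc (0:ℝ) T) (h01 : t0 ≤ t)
    (hne : ∀ u ∈ Ioc t0 t, f u ≠ 0) :
    k.toFun t = k.toFun t0 := by
  have hint2 : (∫ u in Icc 0 T, f u ∂k.stieltjes.measure) = 0 := hint
  have hfi : IntegrableOn f (Icc 0 T) k.stieltjes.measure :=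
    hcont.integrableOn_compact isCompact_Icc
  have hnn' : 0 ≤ᵐ[k.stieltjes.measure.restrict (Icc 0 T)] f :=
    (ae_restrict_iff' measurableSet_Icc).mpr (ae_of_all _ hnn)
  have hae : f =ᵐ[k.stieltjes.measure.restrict (Icc 0 T)] 0 :=
    (integral_eq_zero_iff_of_nonneg_ae hnn' hfi).mp hint2
  have hnull : k.stieltjes.measure ({u | f u ≠ 0} ∩ Icc 0 T) = 0 := by
    have h := ae_iff.mp hae
    simp only [Pi.zero_apply] at h
    rwa [Measure.restrict_apply' measurableSet_Icc] at h
  have hsub : Ioc t0 t ⊆ {u | f u ≠ 0} ∩ Icc 0 T := by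
    intro u hu
    exact ⟨hne u hu, ⟨le_trans ht0.1 hu.1.le, le_trans hu.2 ht.2⟩⟩
  have h0 : k.stieltjes.measure (Ioc t0 t) = 0 := measure_mono_null hsub hnull
  rw [StieltjesFunction.measure_Ioc] at h0
  have h1 : k.stieltjes t - k.stieltjes t0 ≤ 0 := ENNReal.ofReal_eq_zero.mp h0
  have h2 : k.toFun t - k.toFun t0 ≤ 0 := h1
  exact le_antisymm (by linarith) (k.mono h01)

/-- Key one-sided estimate for the backward Skorokhod problem. -/
lemma key (T c C : ℝ) (hT : 0 < T) (hc : 0 < c)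
    (l₁ r₁ l₂ r₂ : ℝ → ℝ → ℝ) (s₁ s₂ : ℝ → ℝ) (a₁ a₂ : ℝ)
    (hA₁ : AssumptionA T c C l₁ r₁) (hA₂ : AssumptionA T c C l₂ r₂)
    (x₁ k₁ x₂ k₂ : ℝ → ℝ)
    (hsol₁ : IsBSPSolution T l₁ r₁ s₁ a₁ x₁ k₁)
    (hsol₂ : IsBSPSolution T l₂ r₂ s₂ a₂ x₂ k₂)
    (Lb Rb S : ℝ)
    (hLb : ∀ t ∈ Icc (0:ℝ) T, ∀ x : ℝ, |l₁ t x - l₂ t x| ≤ Lb)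
    (hRb : ∀ t ∈ Icc (0:ℝ) T, ∀ x : ℝ, |r₁ t x - r₂ t x| ≤ Rb)
    (hS : ∀ t ∈ Icc (0:ℝ) T, |s₁ t - s₂ t| ≤ S) :
    ∀ t0 ∈ Icc (0:ℝ) T,
      (k₁ T - k₁ t0) - (k₂ T - k₂ t0) ≤ |a₁ - a₂| + 2 * S + max Lb Rb / c := by
  have hT0 : (0:ℝ) ∈ Icc (0:ℝ) T := ⟨le_refl _, hT.le⟩
  have hTT : T ∈ Icc (0:ℝ) T := ⟨hT.le, le_refl _⟩
  obtain ⟨kr₁, kl₁, hdec₁, hintl₁, hintr₁⟩ := hsol₁.decomp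
  obtain ⟨kr₂, kl₂, hdec₂, hintl₂, hintr₂⟩ := hsol₂.decomp
  have hS0 : 0 ≤ S := le_trans (abs_nonneg _) (hS 0 hT0)
  have hRb0 : 0 ≤ Rb := le_trans (abs_nonneg _) (hRb T hTT 0)
  have hLb0 : 0 ≤ Lb := le_trans (abs_nonneg _) (hLb T hTT 0)
  have hmax0 : 0 ≤ max Lb Rb := le_trans hLb0 (le_max_left _ _)
  have hm0 : 0 ≤ |a₁ - a₂| + 2 * S + max Lb Rb / c := by
    have := div_nonneg hmax0 hc.le
    have := abs_nonneg (a₁ - a₂)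
    linarith
  -- upper bound on ψ via x
  have hψub : ∀ u ∈ Icc (0:ℝ) T,
      (k₁ T - k₁ u) - (k₂ T - k₂ u) ≤ (x₁ u - x₂ u) + (|a₁ - a₂| + 2 * S) := by
    intro u hu
    have e1 := hsol₁.eqn u hu
    have e2 := hsol₂.eqn u hu
    have hsu := hS u hu
    have hsT := hS T hTT
    have h1 := neg_le_abs (a₁ - a₂)
    have h2 := abs_le.mp hsu
    have h3 := abs_le.mp hsT
    linarith
  intro t0 ht0
  by_contra hcon
  push_neg at hcon
  set m := |a₁ - a₂| + 2 * S + max Lb Rb / c with hmdef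
  set ψ : ℝ → ℝ := fun t => (k₁ T - k₁ t) - (k₂ T - k₂ t) with hψdef
  have hψcont : ContinuousOn ψ (Icc 0 T) :=
    (continuousOn_const.sub hsol₁.k_cont).sub (continuousOn_const.sub hsol₂.k_cont)
  set A : Set ℝ := {u | u ∈ Icc t0 T ∧ ψ u ≤ m} with hAdef
  have hTA : T ∈ A := by
    refine ⟨⟨ht0.2, le_refl _⟩, ?_⟩
    have : ψ T = 0 := by simp [hψdef]
    rw [this]; exact hm0
  have hbdd : BddBelow A := ⟨t0, fun u hu => hu.1.1⟩
  have hclosed : IsClosed A := by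
    have hEq : A = Icc t0 T ∩ ψ ⁻¹' (Iic m) := by
      ext u; simp [hAdef]
    rw [hEq]
    exact (hψcont.mono (Icc_subset_Icc ht0.1 (le_refl _))).preimage_isClosed_of_isClosed
      isClosed_Icc isClosed_Iic
  set t1 := sInf A with ht1def
  have ht1A : t1 ∈ A := hclosed.csInf_mem ⟨T, hTA⟩ hbdd
  have ht01 : t0 ≤ t1 := le_csInf ⟨T, hTA⟩ (fun u hu => hu.1.1)
  have ht0lt : t0 < t1 := by
    rcases lt_or_eq_of_le ht01 with h | h
    · exact h
    · exfalso; rw [← h] at ht1A; exact absurd ht1A.2 (not_le.mpr hcon)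
  have ht1T : t1 ≤ T := ht1A.1.2
  have ht1Icc : t1 ∈ Icc (0:ℝ) T := ⟨le_trans ht0.1 ht01, ht1T⟩
  have huIcc : ∀ u ∈ Ico t0 t1, u ∈ Icc (0:ℝ) T :=
    fun u hu => ⟨le_trans ht0.1 hu.1, le_trans hu.2.le ht1T⟩
  have hgt : ∀ u ∈ Ico t0 t1, m < ψ u := by
    intro u hu
    by_contra h
    push_neg at h
    have : u ∈ A := ⟨⟨hu.1, le_trans hu.2.le ht1T⟩, h⟩
    exact absurd (csInf_le hbdd this) (not_le.mpr hu.2)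
  have hxgap : ∀ u ∈ Ico t0 t1, max Lb Rb < (x₁ u - x₂ u) * c := by
    intro u hu
    have h1 := hψub u (huIcc u hu)
    have h2 := hgt u hu
    have h3 : max Lb Rb / c < x₁ u - x₂ u := by
      rw [hmdef] at h2; simp only [hψdef] at h1 h2; linarith
    exact (div_lt_iff₀ hc).mp h3
  have hxlt : ∀ u ∈ Ico t0 t1, x₂ u < x₁ u := by
    intro u hu
    have h := hxgap u hu
    nlinarith [hc]
  have hrne : ∀ u ∈ Ico t0 t1, r₁ u (x₁ u) ≠ 0 := by
    intro u hu h0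
    have huI := huIcc u hu
    have hx := hxlt u hu
    have hmono := (hA₁.r_mono u huI) hx
    have hlip := (hA₁.r_lip u huI (x₁ u) (x₂ u)).1
    rw [abs_of_pos (sub_pos.mpr hx), abs_of_pos (sub_pos.mpr hmono)] at hlip
    have h2 := abs_le.mp (hRb u huI (x₂ u))
    have h3 := hsol₂.upper u huI
    have hd := hxgap u hu
    have h5 : Rb ≤ max Lb Rb := le_max_right _ _
    have hcomm : c * (x₁ u - x₂ u) = (x₁ u - x₂ u) * c := mul_comm _ _
    linarith
  have hlne : ∀ u ∈ Ico t0 t1, l₂ u (x₂ u) ≠ 0 := by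
    intro u hu h0
    have huI := huIcc u hu
    have hx := hxlt u hu
    have hmono := (hA₂.l_mono u huI) hx
    have hlip := (hA₂.l_lip u huI (x₁ u) (x₂ u)).1
    rw [abs_of_pos (sub_pos.mpr hx), abs_of_pos (sub_pos.mpr hmono)] at hlip
    have h2 := abs_le.mp (hLb u huI (x₁ u))
    have h3 := hsol₁.lower u huI
    have hd := hxgap u hu
    have h5 : Lb ≤ max Lb Rb := le_max_left _ _
    have hcomm : c * (x₁ u - x₂ u) = (x₁ u - x₂ u) * c := mul_comm _ _
    linarith
  have hcontr1 : ContinuousOn (fun u => r₁ u (x₁ u)) (Icc 0 T) :=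
    compCont T C r₁ x₁ hA₁.r_cont (fun t ht a b => (hA₁.r_lip t ht a b).2) hsol₁.x_cont
  have hcontl2 : ContinuousOn (fun u => -(l₂ u (x₂ u))) (Icc 0 T) :=
    (compCont T C l₂ x₂ hA₂.l_cont (fun t ht a b => (hA₂.l_lip t ht a b).2) hsol₂.x_cont).neg
  have hstep : ∀ t ∈ Ioo t0 t1, ψ t0 ≤ ψ t := by
    intro t ht
    have htI : t ∈ Icc (0:ℝ) T := ⟨le_trans ht0.1 ht.1.le, le_trans ht.2.le ht1T⟩
    have hkr1 : kr₁.toFun t = kr₁.toFun t0 := by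
      refine kr₁.const_of_integral_zero (fun u => r₁ u (x₁ u)) hintr₁
        (fun u hu => hsol₁.upper u hu) hcontr1 ht0 htI ht.1.le ?_
      intro u hu
      exact hrne u ⟨hu.1.le, lt_of_le_of_lt hu.2 ht.2⟩
    have hkl2 : kl₂.toFun t = kl₂.toFun t0 := by
      refine kl₂.const_of_integral_zero (fun u => -(l₂ u (x₂ u)))
        (by rw [integral_neg, hintl₂, neg_zero])
        (fun u hu => neg_nonneg.mpr (hsol₂.lower u hu)) hcontl2 ht0 htI ht.1.le ?_
      intro u hu
      exact neg_ne_zero.mpr (hlne u ⟨hu.1.le, lt_of_le_of_lt hu.2 ht.2⟩)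
    have h₁ := hdec₁ t htI
    have h₁0 := hdec₁ t0 ht0
    have h₂ := hdec₂ t htI
    have h₂0 := hdec₂ t0 ht0
    have hm1 : kl₁.toFun t0 ≤ kl₁.toFun t := kl₁.mono ht.1.le
    have hm2 : kr₂.toFun t0 ≤ kr₂.toFun t := kr₂.mono ht.1.le
    simp only [hψdef]
    linarith
  have hlim : ψ t0 ≤ ψ t1 := by
    have hcw : ContinuousWithinAt ψ (Icc 0 T) t1 := hψcont t1 ht1Icc
    have hsubset : Ioo t0 t1 ⊆ Icc (0:ℝ) T :=
      fun u hu => ⟨le_trans ht0.1 hu.1.le, le_trans hu.2.le ht1T⟩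
    have htend : Tendsto ψ (𝓝[Ioo t0 t1] t1) (𝓝 (ψ t1)) := hcw.mono hsubset
    have : (𝓝[Ioo t0 t1] t1).NeBot := right_nhdsWithin_Ioo_neBot ht0lt
    exact ge_of_tendsto htend
      (Filter.eventually_of_mem self_mem_nhdsWithin (fun u hu => hstep u hu))
  have hfin := ht1A.2
  have hcon' : m < ψ t0 := hcon
  linarith

/-- continuous dependence for the backward Skorokhod problem.
If `(xⁱ,kⁱ)` solves `BSP_{lⁱ}^{rⁱ}(sⁱ,aⁱ)`, `i = 1,2`, and the boundary functions
differ by at most `L̄`, `R̄`, then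
`sup_t |k¹(t) - k²(t)| ≤ 2(C/c)|a¹-a²| + 4(C/c) sup_t |s¹(t)-s²(t)| + (2/c) max(L̄,R̄)`. -/
theorem stmt1 (T c C : ℝ) (hT : 0 < T) (hc : 0 < c) (hcC : c < C)
    (l₁ r₁ l₂ r₂ : ℝ → ℝ → ℝ) (s₁ s₂ : ℝ → ℝ) (a₁ a₂ : ℝ)
    (hA₁ : AssumptionA T c C l₁ r₁) (hA₂ : AssumptionA T c C l₂ r₂)
    (hs₁ : ContinuousOn s₁ (Icc 0 T)) (hs₂ : ContinuousOn s₂ (Icc 0 T))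
    (hla₁ : l₁ T a₁ ≤ 0) (hra₁ : 0 ≤ r₁ T a₁)
    (hla₂ : l₂ T a₂ ≤ 0) (hra₂ : 0 ≤ r₂ T a₂)
    (x₁ k₁ x₂ k₂ : ℝ → ℝ)
    (hsol₁ : IsBSPSolution T l₁ r₁ s₁ a₁ x₁ k₁)
    (hsol₂ : IsBSPSolution T l₂ r₂ s₂ a₂ x₂ k₂)
    (Lb Rb : ℝ) (hLb0 : 0 ≤ Lb) (hRb0 : 0 ≤ Rb)
    (hLb : ∀ t ∈ Icc (0 : ℝ) T, ∀ x : ℝ, |l₁ t x - l₂ t x| ≤ Lb)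
    (hRb : ∀ t ∈ Icc (0 : ℝ) T, ∀ x : ℝ, |r₁ t x - r₂ t x| ≤ Rb) :
    ∀ t ∈ Icc (0 : ℝ) T,
      |k₁ t - k₂ t| ≤ 2 * (C / c) * |a₁ - a₂|
        + 4 * (C / c) * sSup ((fun u => |s₁ u - s₂ u|) '' Icc 0 T)
        + (2 / c) * max Lb Rb := by
  intro t ht
  have hT0 : (0:ℝ) ∈ Icc (0:ℝ) T := ⟨le_refl _, hT.le⟩
  set S := sSup ((fun u => |s₁ u - s₂ u|) '' Icc 0 T) with hSdef
  have hbddA : BddAbove ((fun u => |s₁ u - s₂ u|) '' Icc 0 T) :=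
    (isCompact_Icc.image_of_continuousOn ((hs₁.sub hs₂).abs)).bddAbove
  have hS : ∀ u ∈ Icc (0:ℝ) T, |s₁ u - s₂ u| ≤ S :=
    fun u hu => le_csSup hbddA ⟨u, hu, rfl⟩
  have hS' : ∀ u ∈ Icc (0:ℝ) T, |s₂ u - s₁ u| ≤ S := by
    intro u hu; rw [abs_sub_comm]; exact hS u hu
  have hLb' : ∀ u ∈ Icc (0:ℝ) T, ∀ x : ℝ, |l₂ u x - l₁ u x| ≤ Lb := by
    intro u hu x; rw [abs_sub_comm]; exact hLb u hu x
  have hRb' : ∀ u ∈ Icc (0:ℝ) T, ∀ x : ℝ, |r₂ u x - r₁ u x| ≤ Rb := by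
    intro u hu x; rw [abs_sub_comm]; exact hRb u hu x
  have key12 := key T c C hT hc l₁ r₁ l₂ r₂ s₁ s₂ a₁ a₂ hA₁ hA₂ x₁ k₁ x₂ k₂
    hsol₁ hsol₂ Lb Rb S hLb hRb hS
  have key21 := key T c C hT hc l₂ r₂ l₁ r₁ s₂ s₁ a₂ a₁ hA₂ hA₁ x₂ k₂ x₁ k₁
    hsol₂ hsol₁ Lb Rb S hLb' hRb' hS'
  have h1 := key12 0 hT0
  have h2 := key12 t ht
  have h3 := key21 0 hT0
  have h4 := key21 t ht
  rw [abs_sub_comm a₂ a₁] at h3 h4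
  have hz1 := hsol₁.k_zero
  have hz2 := hsol₂.k_zero
  have hS0 : 0 ≤ S := le_trans (abs_nonneg _) (hS 0 hT0)
  have habs0 : 0 ≤ |a₁ - a₂| := abs_nonneg _
  have hCc : 1 ≤ C / c := (one_le_div hc).mpr hcC.le
  have hmax0 : 0 ≤ max Lb Rb := le_trans hLb0 (le_max_left _ _)
  have hda : |a₁ - a₂| ≤ (C / c) * |a₁ - a₂| := by nlinarith
  have hdS : S ≤ (C / c) * S := by nlinarith
  have hdiv : 2 * (max Lb Rb / c) = 2 / c * max Lb Rb := by ring
  rw [abs_le]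
  constructor <;> linarith
end

section
/- Let T > 0, let l, r : [0,T] × ℝ → ℝ satisfy l ≤ r pointwise, let s ∈ C[0,T] and a ∈ ℝ. Define s̃(t) := a + s(T) − s(T−t), l̃(t,x) := l(T−t,x) and r̃(t,x) := r(T−t,x) for (t,x) ∈ [0,T] × ℝ. Suppose (x̃, k̃) is a solution of the forward Skorokhod problem SP_{l̃}^{r̃}(s̃). Define x(t) := x̃(T−t) and k(t) := k̃(T) − k̃(T−t) for t ∈ [0,T]. Then l(T,a) ≤ 0 ≤ r(T,a) and (x,k) is a solution of the backward Skorokhod problem BSP_l^r(s,a). -/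
open MeasureTheory Set

/-- Solution of the (forward) Skorokhod problem `SP_l^r(s)`:
`x(t) = s(t) + k(t)`, the constraints `l(t,x(t)) ≤ 0 ≤ r(t,x(t))`,
and `k = k^r - k^l` with `k^r, k^l ∈ I[0,T]` satisfying the Skorokhod conditions. -/
structure IsSPSolution (T : ℝ) (l r : ℝ → ℝ → ℝ) (s : ℝ → ℝ)
    (x k : ℝ → ℝ) : Prop where
  x_cont : ContinuousOn x (Icc 0 T)
  k_cont : ContinuousOn k (Icc 0 T)
  k_bv : BoundedVariationOn k (Icc 0 T)
  k_zero : k 0 = 0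
  eqn : ∀ t ∈ Icc 0 T, x t = s t + k t
  lower : ∀ t ∈ Icc 0 T, l t (x t) ≤ 0
  upper : ∀ t ∈ Icc 0 T, 0 ≤ r t (x t)
  decomp : ∃ kr kl : IFun T, (∀ t ∈ Icc 0 T, k t = kr.toFun t - kl.toFun t) ∧
      (∫ t in Icc 0 T, l t (x t) ∂kl.measure) = 0 ∧
      (∫ t in Icc 0 T, r t (x t) ∂kr.measure) = 0

noncomputable def IFun.rev {T : ℝ} (k : IFun T) : IFun T where
  toFun t := k.toFun T - k.toFun (T - t)
  mono := fun a b hab => by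
    have := k.mono (sub_le_sub_left hab T); simp only []; linarith
  cont := continuous_const.sub (k.cont.comp (continuous_const.sub continuous_id))
  zero_left := fun t ht => by
    rw [k.const_right (T - t) (by linarith)]; ring
  const_right := fun t ht => by
    rw [k.zero_left (T - t) (by linarith), k.zero_left (T - T) (by simp)]

lemma IFun.leftLim_eq {T : ℝ} (k : IFun T) (x : ℝ) :
    Function.leftLim k.toFun x = k.toFun x :=
  leftLim_eq_of_tendsto (h := nhdsLT_neBot x)
    (k.cont.continuousAt.tendsto.mono_left nhdsWithin_le_nhds)

lemma IFun.measure_rev {T : ℝ} (k : IFun T) :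
    (k.rev).measure = Measure.map (fun t => T - t) k.measure := by
  haveI : IsLocallyFiniteMeasure (IFun.measure k.rev) :=
    inferInstanceAs (IsLocallyFiniteMeasure k.rev.stieltjes.measure)
  refine Measure.ext_of_Ioc _ _ (fun a b hab => ?_)
  rw [Measure.map_apply (by fun_prop : Measurable fun t : ℝ => T - t) measurableSet_Ioc]
  have hpre : (fun t : ℝ => T - t) ⁻¹' Ioc a b = Ico (T - b) (T - a) := by
    ext u
    simp only [mem_preimage, mem_Ioc, mem_Ico]
    constructor <;> intro h <;> constructor <;> linarith [h.1, h.2]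
  rw [hpre, IFun.measure, IFun.measure, StieltjesFunction.measure_Ioc,
    StieltjesFunction.measure_Ico]
  show ENNReal.ofReal (k.rev.toFun b - k.rev.toFun a) = _
  have h1 : Function.leftLim k.stieltjes (T - a) = k.toFun (T - a) := k.leftLim_eq _
  have h2 : Function.leftLim k.stieltjes (T - b) = k.toFun (T - b) := k.leftLim_eq _
  rw [h1, h2]
  show ENNReal.ofReal ((k.toFun T - k.toFun (T - b)) - (k.toFun T - k.toFun (T - a))) = _
  ring_nf

/-- time reversal: if `(x̃,k̃)` solves the forward Skorokhod problem
for `s̃(t) = a + s(T) - s(T-t)` with boundaries `l̃(t,x) = l(T-t,x)`,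
`r̃(t,x) = r(T-t,x)`, then `l(T,a) ≤ 0 ≤ r(T,a)` and
`(x̃(T-·), k̃(T) - k̃(T-·))` solves the backward Skorokhod problem `BSP_l^r(s,a)`. -/
theorem stmt3 (T : ℝ) (hT : 0 < T) (l r : ℝ → ℝ → ℝ)
    (hlr : ∀ t ∈ Icc (0 : ℝ) T, ∀ x : ℝ, l t x ≤ r t x)
    (s : ℝ → ℝ) (hs : ContinuousOn s (Icc 0 T)) (a : ℝ)
    (xt kt : ℝ → ℝ)
    (hsol : IsSPSolution T (fun t x => l (T - t) x) (fun t x => r (T - t) x)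
      (fun t => a + s T - s (T - t)) xt kt) :
    l T a ≤ 0 ∧ 0 ≤ r T a ∧
      IsBSPSolution T l r s a (fun t => xt (T - t)) (fun t => kt T - kt (T - t)) := by
  have h0 : (0 : ℝ) ∈ Icc (0 : ℝ) T := ⟨le_rfl, hT.le⟩
  have hTmem : T ∈ Icc (0 : ℝ) T := ⟨hT.le, le_rfl⟩
  have hmap : MapsTo (fun t : ℝ => T - t) (Icc 0 T) (Icc 0 T) := fun t ht => by
    simp only [mem_Icc] at ht ⊢
    constructor <;> linarith
  have hxt0 : xt 0 = a := by
    have h := hsol.eqn 0 h0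
    simp only [sub_zero, hsol.k_zero] at h
    simpa using h
  have hcont_ref : ContinuousOn (fun t : ℝ => T - t) (Icc (0:ℝ) T) :=
    (continuous_const.sub continuous_id).continuousOn
  have hanti : AntitoneOn (fun t : ℝ => T - t) (Icc (0:ℝ) T) :=
    fun x _ y _ hxy => by simp only []; linarith
  have himg : (fun t : ℝ => T - t) '' Icc 0 T = Icc 0 T := by
    rw [image_const_sub_Icc]; simp
  refine ⟨?_, ?_, ?_⟩
  · have := hsol.lower 0 h0; simpa [hxt0] using this
  · have := hsol.upper 0 h0; simpa [hxt0] using this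
  obtain ⟨kr, kl, hdec, hl, hr⟩ := hsol.decomp
  have h2 := hdec T hTmem
  have hdecomp : ∀ t ∈ Icc (0:ℝ) T,
      kt T - kt (T - t) = kr.rev.toFun t - kl.rev.toFun t := fun t ht => by
    have h1 := hdec (T - t) (hmap ht)
    show kt T - kt (T - t) = (kr.toFun T - kr.toFun (T - t)) - (kl.toFun T - kl.toFun (T - t))
    rw [h1, h2]; ring
  constructor
  · exact hsol.x_cont.comp hcont_ref hmap
  · exact continuousOn_const.sub (hsol.k_cont.comp hcont_ref hmap)
  · -- k_bv
    have hbv : BoundedVariationOn (kt ∘ fun t : ℝ => T - t) (Icc 0 T) := by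
      unfold BoundedVariationOn
      rw [eVariationOn.comp_eq_of_antitoneOn kt _ hanti, himg]
      exact hsol.k_bv
    have hlip : LipschitzWith 1 (fun y : ℝ => kt T - y) :=
      LipschitzWith.of_dist_le_mul fun x y => by
        simp only [Real.dist_eq, NNReal.coe_one, one_mul]
        have h : (kt T - x) - (kt T - y) = y - x := by ring
        rw [h, abs_sub_comm]
    exact hlip.comp_boundedVariationOn hbv
  · simp
  · intro t ht
    have h1 := hsol.eqn (T - t) (hmap ht)
    simp only [sub_sub_cancel] at h1
    rw [h1]
    have : T - T = (0:ℝ) := by ring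
    rw [this, hsol.k_zero]
    ring
  · intro t ht
    have := hsol.lower (T - t) (hmap ht)
    simpa [sub_sub_cancel] using this
  · intro t ht
    have := hsol.upper (T - t) (hmap ht)
    simpa [sub_sub_cancel] using this
  · refine ⟨kr.rev, kl.rev, hdecomp, ?_, ?_⟩
    · rw [IFun.measure_rev]
      have hemb : MeasurableEmbedding (fun t : ℝ => T - t) :=
        (MeasurableEquiv.subLeft T).measurableEmbedding
      rw [hemb.setIntegral_map]
      rw [preimage_const_sub_Icc]
      simp only [sub_self, sub_zero, sub_sub_cancel]
      exact hl
    · rw [IFun.measure_rev]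
      have hemb : MeasurableEmbedding (fun t : ℝ => T - t) :=
        (MeasurableEquiv.subLeft T).measurableEmbedding
      rw [hemb.setIntegral_map]
      rw [preimage_const_sub_Icc]
      simp only [sub_self, sub_zero, sub_sub_cancel]
      exact hr
end

section
/- Let T > 0. For i = 1,2, let a^i ∈ ℝ, s^i ∈ C[0,T], and let l^i, r^i : [0,T] × ℝ → ℝ satisfy Assumption (A) with the same constants 0 < c < C and l^i(T,a^i) ≤ 0 ≤ r^i(T,a^i), and let (x^i,k^i) be a solution of the backward Skorokhod problem BSP_{l^i}^{r^i}(s^i,a^i). Fix t ∈ [0,T] and suppose L̄, R̄, S̄ ∈ [0,∞) satisfy |l¹(v,x) − l²(v,x)| ≤ L̄ and |r¹(v,x) − r²(v,x)| ≤ R̄ for all (v,x) ∈ [t,T] × ℝ, and |(a¹ + s¹(T) − s¹(v)) − (a² + s²(T) − s²(v))| ≤ S̄ for all v ∈ [t,T]. Then |(k¹(T) − k¹(t)) − (k²(T) − k²(t))| ≤ (C/c) S̄ + (1/c) max(L̄, R̄). -/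
open MeasureTheory Set Filter Topology

lemma exists_zero_pt {T : ℝ} (k : IFun T) (g : ℝ → ℝ)
    (hg : ContinuousOn g (Icc 0 T))
    (hsign : ∀ v ∈ Icc (0:ℝ) T, 0 ≤ g v)
    (hint : (∫ v in Icc (0:ℝ) T, g v ∂k.measure) = 0)
    {u v₀ : ℝ} (hsub : Ioc u v₀ ⊆ Icc 0 T)
    (hpos : k.toFun u < k.toFun v₀) :
    ∃ z ∈ Ioc u v₀, g z = 0 := by
  haveI : IsLocallyFiniteMeasure k.measure := by
    unfold IFun.measure; infer_instance
  have hInt : IntegrableOn g (Icc 0 T) k.measure :=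
    hg.integrableOn_compact isCompact_Icc
  have hae : 0 ≤ᵐ[k.measure.restrict (Icc 0 T)] g := by
    rw [Filter.EventuallyLE, ae_restrict_iff' measurableSet_Icc]
    exact ae_of_all _ hsign
  have hzero : g =ᵐ[k.measure.restrict (Icc 0 T)] 0 :=
    (MeasureTheory.setIntegral_eq_zero_iff_of_nonneg_ae hae hInt).mp hint
  by_contra hcon
  push_neg at hcon
  have h0 : k.measure.restrict (Icc 0 T) {v | ¬ g v = 0} = 0 := by
    have := hzero
    rw [Filter.EventuallyEq, ae_iff] at this
    simpa using this
  have h1 : k.measure.restrict (Icc 0 T) (Ioc u v₀) = 0 :=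
    measure_mono_null (fun z hz => hcon z hz) h0
  rw [Measure.restrict_apply measurableSet_Ioc, inter_eq_left.mpr hsub] at h1
  have h2 : k.measure (Ioc u v₀) = ENNReal.ofReal (k.toFun v₀ - k.toFun u) :=
    k.stieltjes.measure_Ioc u v₀
  rw [h2] at h1
  rw [ENNReal.ofReal_eq_zero] at h1
  linarith

lemma contOn_comp {T C : ℝ} (r : ℝ → ℝ → ℝ) (x : ℝ → ℝ)
    (hr : ∀ y : ℝ, ContinuousOn (fun v => r v y) (Icc 0 T))
    (hlip : ∀ t ∈ Icc (0:ℝ) T, ∀ a b : ℝ, |r t a - r t b| ≤ C * |a - b|)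
    (hx : ContinuousOn x (Icc 0 T)) :
    ContinuousOn (fun v => r v (x v)) (Icc 0 T) := by
  intro v₀ hv₀
  have hx0 : ContinuousWithinAt x (Icc 0 T) v₀ := hx v₀ hv₀
  have hr0 : ContinuousWithinAt (fun v => r v (x v₀)) (Icc 0 T) v₀ := hr (x v₀) v₀ hv₀
  have key : Tendsto (fun v => r v (x v) - r v (x v₀)) (𝓝[Icc (0:ℝ) T] v₀) (𝓝 0) := by
    have hx0' : Tendsto x (𝓝[Icc (0:ℝ) T] v₀) (𝓝 (x v₀)) := hx0
    have h1 : Tendsto (fun v => x v - x v₀) (𝓝[Icc (0:ℝ) T] v₀) (𝓝 0) := by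
      simpa using hx0'.sub (tendsto_const_nhds (x := x v₀) (f := 𝓝[Icc (0:ℝ) T] v₀))
    have hb : Tendsto (fun v => C * |x v - x v₀|) (𝓝[Icc (0:ℝ) T] v₀) (𝓝 0) := by
      have h2 := h1.abs
      simpa using h2.const_mul C
    apply squeeze_zero_norm' _ hb
    filter_upwards [self_mem_nhdsWithin] with v hv
    simpa [Real.norm_eq_abs] using hlip v hv (x v) (x v₀)
  have hfin := key.add hr0
  exact (by simpa using hfin : Tendsto (fun v => r v (x v)) (𝓝[Icc (0:ℝ) T] v₀) (𝓝 (r v₀ (x v₀))))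

lemma oneSide (T c C : ℝ) (hc : 0 < c) (hcC : c ≤ C)
    (l₁ r₁ l₂ r₂ : ℝ → ℝ → ℝ) (s₁ s₂ : ℝ → ℝ) (a₁ a₂ : ℝ)
    (hA₁ : AssumptionA T c C l₁ r₁) (hA₂ : AssumptionA T c C l₂ r₂)
    (x₁ k₁ x₂ k₂ : ℝ → ℝ)
    (hsol₁ : IsBSPSolution T l₁ r₁ s₁ a₁ x₁ k₁)
    (hsol₂ : IsBSPSolution T l₂ r₂ s₂ a₂ x₂ k₂)
    (t : ℝ) (ht : t ∈ Icc (0 : ℝ) T)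
    (Lb Rb Sb : ℝ) (hLb0 : 0 ≤ Lb) (hRb0 : 0 ≤ Rb) (hSb0 : 0 ≤ Sb)
    (hLb : ∀ v ∈ Icc t T, ∀ x : ℝ, |l₁ v x - l₂ v x| ≤ Lb)
    (hRb : ∀ v ∈ Icc t T, ∀ x : ℝ, |r₁ v x - r₂ v x| ≤ Rb)
    (hSb : ∀ v ∈ Icc t T, |(a₁ + s₁ T - s₁ v) - (a₂ + s₂ T - s₂ v)| ≤ Sb) :
    (k₁ T - k₁ t) - (k₂ T - k₂ t) ≤ C / c * Sb + 1 / c * max Lb Rb := by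
  by_contra hcon
  push_neg at hcon
  set M : ℝ := C / c * Sb + 1 / c * max Lb Rb with hMdef
  have ht0 : (0:ℝ) ≤ t := ht.1
  have htT : t ≤ T := ht.2
  have hsub : Icc t T ⊆ Icc (0:ℝ) T := Icc_subset_Icc ht0 le_rfl
  set f : ℝ → ℝ := fun v => (k₁ T - k₁ v) - (k₂ T - k₂ v) with hfdef
  have hfcont : ContinuousOn f (Icc t T) :=
    (continuousOn_const.sub (hsol₁.k_cont.mono hsub)).sub
      (continuousOn_const.sub (hsol₂.k_cont.mono hsub))
  have hCc1 : (1:ℝ) ≤ C / c := (one_le_div hc).mpr hcC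
  have hinvc : (0:ℝ) < 1 / c := by positivity
  have hmax0 : (0:ℝ) ≤ max Lb Rb := le_trans hLb0 (le_max_left _ _)
  have hSbM : Sb ≤ C / c * Sb := le_mul_of_one_le_left hSb0 hCc1
  have hMSb : Sb ≤ M := by
    rw [hMdef]
    nlinarith
  have hM0 : (0:ℝ) ≤ M := le_trans hSb0 hMSb
  -- maximum of f on [t,T]
  obtain ⟨w, hw, hwmax'⟩ := isCompact_Icc.exists_isMaxOn (nonempty_Icc.mpr htT) hfcont
  have hwmax : ∀ y ∈ Icc t T, f y ≤ f w := fun y hy => hwmax' hy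
  have hft : f t = (k₁ T - k₁ t) - (k₂ T - k₂ t) := rfl
  have hθM : M < f w := by
    have := hwmax t (left_mem_Icc.mpr htT)
    rw [hft] at this
    linarith
  -- last point of maximum
  set S : Set ℝ := Icc t T ∩ f ⁻¹' {f w} with hSdef
  have hSclosed : IsClosed S :=
    hfcont.preimage_isClosed_of_isClosed isClosed_Icc isClosed_singleton
  have hScomp : IsCompact S := isCompact_Icc.of_isClosed_subset hSclosed inter_subset_left
  have hSne : S.Nonempty := ⟨w, hw, rfl⟩
  set u := sSup S with hudef
  have huS : u ∈ S := hScomp.sSup_mem hSne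
  obtain ⟨hu, hfu⟩ := huS
  have hfu' : f u = f w := hfu
  have hfT : f T = 0 := by simp [hfdef]
  have huT : u < T := by
    rcases lt_or_eq_of_le hu.2 with h | h
    · exact h
    · exfalso
      rw [h, hfT] at hfu'
      linarith
  have hlt : ∀ v ∈ Ioc u T, f v < f w := by
    intro v hv
    have hvmem : v ∈ Icc t T := ⟨le_trans hu.1 hv.1.le, hv.2⟩
    rcases lt_or_eq_of_le (hwmax v hvmem) with h | h
    · exact h
    · exfalso
      have hvS : v ∈ S := ⟨hvmem, h⟩
      have := le_csSup hScomp.bddAbove hvS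
      exact absurd this (not_le.mpr hv.1)
  -- a right neighborhood of u where f > M
  have hev : ∀ᶠ v in 𝓝[Icc t T] u, M < f v := by
    have h1 : Tendsto f (𝓝[Icc t T] u) (𝓝 (f u)) := hfcont u hu
    exact h1.eventually (eventually_gt_nhds (by rw [hfu']; exact hθM))
  rw [Filter.eventually_iff, Metric.mem_nhdsWithin_iff] at hev
  obtain ⟨δ, hδ0, hδ⟩ := hev
  set v₁ : ℝ := min (u + δ/2) T with hv₁def
  have huv₁ : u < v₁ := lt_min (by linarith) huT
  have hv₁T : v₁ ≤ T := min_le_right _ _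
  have hIocsub : Ioc u v₁ ⊆ Icc t T := fun z hz => ⟨le_trans hu.1 hz.1.le, le_trans hz.2 hv₁T⟩
  have hIocsub0 : Ioc u v₁ ⊆ Icc (0:ℝ) T := fun z hz => hsub (hIocsub hz)
  have hfIoc : ∀ z ∈ Ioc u v₁, M < f z := by
    intro z hz
    apply hδ
    refine ⟨?_, hIocsub hz⟩
    rw [Metric.mem_ball, Real.dist_eq, abs_of_pos (sub_pos.mpr hz.1)]
    have hle : z ≤ u + δ/2 := le_trans hz.2 (min_le_left _ _)
    linarith
  obtain ⟨kr₁, kl₁, hk₁, hil₁, hir₁⟩ := hsol₁.decomp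
  obtain ⟨kr₂, kl₂, hk₂, hil₂, hir₂⟩ := hsol₂.decomp
  -- find a point z in (u, v₁] where a boundary condition is active
  have hzex : ∃ z ∈ Ioc u v₁, (r₁ z (x₁ z) = 0 ∨ l₂ z (x₂ z) = 0) := by
    by_cases hcase : ∃ v ∈ Ioc u v₁, kr₁.toFun v = kr₁.toFun u
    · obtain ⟨v₀, hv₀, hkr⟩ := hcase
      have hv₀T : v₀ ∈ Ioc u T := ⟨hv₀.1, le_trans hv₀.2 hv₁T⟩
      have hfd : f v₀ < f u := by rw [hfu']; exact hlt v₀ hv₀T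
      have hu0T : u ∈ Icc (0:ℝ) T := hsub hu
      have hv₀0T : v₀ ∈ Icc (0:ℝ) T := hIocsub0 hv₀
      have e1 := hk₁ u hu0T
      have e2 := hk₁ v₀ hv₀0T
      have e3 := hk₂ u hu0T
      have e4 := hk₂ v₀ hv₀0T
      have m1 : kl₁.toFun u ≤ kl₁.toFun v₀ := kl₁.mono hv₀.1.le
      have m2 : kr₂.toFun u ≤ kr₂.toFun v₀ := kr₂.mono hv₀.1.le
      have hfu_eq : f u = (k₁ T - k₁ u) - (k₂ T - k₂ u) := rfl
      have hfv_eq : f v₀ = (k₁ T - k₁ v₀) - (k₂ T - k₂ v₀) := rfl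
      have hklpos : kl₂.toFun u < kl₂.toFun v₀ := by linarith
      have hg : ContinuousOn (fun v => -(l₂ v (x₂ v))) (Icc (0:ℝ) T) :=
        (contOn_comp l₂ x₂ hA₂.l_cont (fun t ht a b => (hA₂.l_lip t ht a b).2)
          hsol₂.x_cont).neg
      have hint : (∫ v in Icc (0:ℝ) T, -(l₂ v (x₂ v)) ∂kl₂.measure) = 0 := by
        rw [integral_neg, hil₂, neg_zero]
      have hsign : ∀ v ∈ Icc (0:ℝ) T, 0 ≤ -(l₂ v (x₂ v)) :=
        fun v hv => neg_nonneg.mpr (hsol₂.lower v hv)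
      obtain ⟨z, hz, hz0⟩ := exists_zero_pt kl₂ _ hg hsign hint
        (fun y hy => hIocsub0 (Ioc_subset_Ioc_right hv₀.2 hy)) hklpos
      exact ⟨z, Ioc_subset_Ioc_right hv₀.2 hz, Or.inr (neg_eq_zero.mp hz0)⟩
    · push_neg at hcase
      have hne := hcase v₁ ⟨huv₁, le_rfl⟩
      have hm : kr₁.toFun u ≤ kr₁.toFun v₁ := kr₁.mono huv₁.le
      have hkrpos : kr₁.toFun u < kr₁.toFun v₁ := lt_of_le_of_ne hm (Ne.symm hne)
      have hg : ContinuousOn (fun v => r₁ v (x₁ v)) (Icc (0:ℝ) T) :=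
        contOn_comp r₁ x₁ hA₁.r_cont (fun t ht a b => (hA₁.r_lip t ht a b).2) hsol₁.x_cont
      obtain ⟨z, hz, hz0⟩ := exists_zero_pt kr₁ _ hg hsol₁.upper hir₁ hIocsub0 hkrpos
      exact ⟨z, hz, Or.inl hz0⟩
  obtain ⟨z, hz, hzcase⟩ := hzex
  have hz_tT : z ∈ Icc t T := hIocsub hz
  have hz0T : z ∈ Icc (0:ℝ) T := hsub hz_tT
  have hMz : M < f z := hfIoc z hz
  have he₁ := hsol₁.eqn z hz0T
  have he₂ := hsol₂.eqn z hz0T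
  have hfz_eq : f z = (k₁ T - k₁ z) - (k₂ T - k₂ z) := rfl
  have hD := abs_le.mp (hSb z hz_tT)
  have hx_lt : x₂ z < x₁ z := by linarith
  rcases hzcase with hr0 | hl0
  · have h1 : 0 ≤ r₂ z (x₂ z) := hsol₂.upper z hz0T
    have h2 := abs_le.mp (hRb z hz_tT (x₁ z))
    have hmono : r₂ z (x₂ z) < r₂ z (x₁ z) := hA₂.r_mono z hz0T hx_lt
    have hlip := (hA₂.r_lip z hz0T (x₁ z) (x₂ z)).1
    rw [abs_of_pos (sub_pos.mpr hx_lt), abs_of_pos (sub_pos.mpr hmono)] at hlip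
    have hxd : x₁ z - x₂ z ≤ 1 / c * Rb := by
      rw [div_mul_eq_mul_div, one_mul, le_div_iff₀ hc]
      linarith [mul_comm c (x₁ z - x₂ z)]
    have hRmax : 1 / c * Rb ≤ 1 / c * max Lb Rb :=
      mul_le_mul_of_nonneg_left (le_max_right _ _) hinvc.le
    have hMz' : C / c * Sb + 1 / c * max Lb Rb < k₁ T - k₁ z - (k₂ T - k₂ z) := by
      rw [hfz_eq] at hMz; rw [hMdef] at hMz; exact hMz
    linarith [hD.1, hD.2, hMz', hSbM, he₁, he₂, hxd, hRmax]
  · have h1 : l₁ z (x₁ z) ≤ 0 := hsol₁.lower z hz0T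
    have h2 := abs_le.mp (hLb z hz_tT (x₁ z))
    have hmono : l₂ z (x₂ z) < l₂ z (x₁ z) := hA₂.l_mono z hz0T hx_lt
    have hlip := (hA₂.l_lip z hz0T (x₁ z) (x₂ z)).1
    rw [abs_of_pos (sub_pos.mpr hx_lt), abs_of_pos (sub_pos.mpr hmono)] at hlip
    have hxd : x₁ z - x₂ z ≤ 1 / c * Lb := by
      rw [div_mul_eq_mul_div, one_mul, le_div_iff₀ hc]
      linarith [mul_comm c (x₁ z - x₂ z)]
    have hLmax : 1 / c * Lb ≤ 1 / c * max Lb Rb :=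
      mul_le_mul_of_nonneg_left (le_max_left _ _) hinvc.le
    have hMz' : C / c * Sb + 1 / c * max Lb Rb < k₁ T - k₁ z - (k₂ T - k₂ z) := by
      rw [hfz_eq] at hMz; rw [hMdef] at hMz; exact hMz
    linarith [hD.1, hD.2, hMz', hSbM, he₁, he₂, hxd, hLmax]


/-- local continuous dependence on `[t,T]`: if the boundary
functions differ by at most `L̄`, `R̄` on `[t,T] × ℝ` and the shifted inputs differ
by at most `S̄` on `[t,T]`, then
`|(k¹(T) - k¹(t)) - (k²(T) - k²(t))| ≤ (C/c) S̄ + (1/c) max(L̄,R̄)`. -/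
theorem stmt4 (T c C : ℝ) (hT : 0 < T) (hc : 0 < c) (hcC : c < C)
    (l₁ r₁ l₂ r₂ : ℝ → ℝ → ℝ) (s₁ s₂ : ℝ → ℝ) (a₁ a₂ : ℝ)
    (hA₁ : AssumptionA T c C l₁ r₁) (hA₂ : AssumptionA T c C l₂ r₂)
    (hs₁ : ContinuousOn s₁ (Icc 0 T)) (hs₂ : ContinuousOn s₂ (Icc 0 T))
    (hla₁ : l₁ T a₁ ≤ 0) (hra₁ : 0 ≤ r₁ T a₁)
    (hla₂ : l₂ T a₂ ≤ 0) (hra₂ : 0 ≤ r₂ T a₂)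
    (x₁ k₁ x₂ k₂ : ℝ → ℝ)
    (hsol₁ : IsBSPSolution T l₁ r₁ s₁ a₁ x₁ k₁)
    (hsol₂ : IsBSPSolution T l₂ r₂ s₂ a₂ x₂ k₂)
    (t : ℝ) (ht : t ∈ Icc (0 : ℝ) T)
    (Lb Rb Sb : ℝ) (hLb0 : 0 ≤ Lb) (hRb0 : 0 ≤ Rb) (hSb0 : 0 ≤ Sb)
    (hLb : ∀ v ∈ Icc t T, ∀ x : ℝ, |l₁ v x - l₂ v x| ≤ Lb)
    (hRb : ∀ v ∈ Icc t T, ∀ x : ℝ, |r₁ v x - r₂ v x| ≤ Rb)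
    (hSb : ∀ v ∈ Icc t T, |(a₁ + s₁ T - s₁ v) - (a₂ + s₂ T - s₂ v)| ≤ Sb) :
    |(k₁ T - k₁ t) - (k₂ T - k₂ t)| ≤ (C / c) * Sb + (1 / c) * max Lb Rb := by
  have h1 := oneSide T c C hc hcC.le l₁ r₁ l₂ r₂ s₁ s₂ a₁ a₂ hA₁ hA₂ x₁ k₁ x₂ k₂
    hsol₁ hsol₂ t ht Lb Rb Sb hLb0 hRb0 hSb0 hLb hRb hSb
  have h2 := oneSide T c C hc hcC.le l₂ r₂ l₁ r₁ s₂ s₁ a₂ a₁ hA₂ hA₁ x₂ k₂ x₁ k₁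
    hsol₂ hsol₁ t ht Lb Rb Sb hLb0 hRb0 hSb0
    (fun v hv y => by rw [abs_sub_comm]; exact hLb v hv y)
    (fun v hv y => by rw [abs_sub_comm]; exact hRb v hv y)
    (fun v hv => by rw [abs_sub_comm]; exact hSb v hv)
  rw [abs_sub_le_iff]
  exact ⟨h1, h2⟩
end

section
/- Let T > 0 and let φ, ψ : [0,T] × ℝ → ℝ be continuous functions such that ψ(t,·) and φ(t,·) are strictly increasing for every t ∈ [0,T]. For i = 1, 2, let A^{R,i}, A^{L,i} ∈ I[0,T], set A^i := A^{R,i} − A^{L,i} and y^i(t) := A^i(T) − A^i(t), and assume: ψ(t, y^i(t)) ≤ 0 ≤ φ(t, y^i(t)) for all t ∈ [0,T]; ∫_0^T φ(t, y^i(t)) dA^{R,i}(t) = 0 and ∫_0^T ψ(t, y^i(t)) dA^{L,i}(t) = 0, the integrals being Lebesgue–Stieltjes integrals. Then A^1(T) − A^1(t) = A^2(T) − A^2(t) for all t ∈ [0,T]; equivalently, A^1(t) = A^2(t) for all t ∈ [0,T]. -/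
open MeasureTheory Set

/-- The "backward remainder" `t ↦ A(T) - A(t)` of `A = A^R - A^L`. -/
noncomputable def backRem (T : ℝ) (AR AL : IFun T) : ℝ → ℝ :=
  fun t => (AR.toFun T - AL.toFun T) - (AR.toFun t - AL.toFun t)

/-- If the Stieltjes measure of an interval `(a,b)` vanishes, the (continuous) function is
constant on `[a,b]`. -/
lemma IFun.eq_of_measure_Ioo_eq_zero {T : ℝ} (k : IFun T) {a b : ℝ} (hab : a < b)
    (h : k.measure (Ioo a b) = 0) : k.toFun b = k.toFun a := by
  have hl : Function.leftLim k.stieltjes b = k.stieltjes b :=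
    leftLim_eq_of_tendsto (h := nhdsLT_neBot b)
      ((k.cont.tendsto b).mono_left nhdsWithin_le_nhds)
  rw [IFun.measure, StieltjesFunction.measure_Ioo, hl] at h
  have h1 : (k.stieltjes b : ℝ) - k.stieltjes a ≤ 0 := ENNReal.ofReal_eq_zero.1 h
  have h2 : k.toFun a ≤ k.toFun b := k.mono hab.le
  have hba : (k.stieltjes b : ℝ) = k.toFun b := rfl
  have haa : (k.stieltjes a : ℝ) = k.toFun a := rfl
  linarith [hba ▸ haa ▸ h1]

/-- A nonnegative continuous function with vanishing set integral vanishes a.e. -/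
lemma ae_zero_of_setIntegral {T : ℝ} (k : IFun T) (f : ℝ → ℝ)
    (hf : ContinuousOn f (Icc 0 T))
    (hpos : ∀ t ∈ Icc (0:ℝ) T, 0 ≤ f t)
    (hint : (∫ t in Icc 0 T, f t ∂k.measure) = 0) :
    ∀ᵐ t ∂(k.measure.restrict (Icc 0 T)), f t = 0 := by
  have hloc : IsLocallyFiniteMeasure k.measure := by
    rw [IFun.measure]; infer_instance
  have hInt : IntegrableOn f (Icc 0 T) k.measure :=
    hf.integrableOn_compact isCompact_Icc
  have h0 : 0 ≤ᵐ[k.measure.restrict (Icc 0 T)] f :=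
    (ae_restrict_iff' measurableSet_Icc).2 (Filter.Eventually.of_forall hpos)
  exact (integral_eq_zero_iff_of_nonneg_ae h0 hInt).1 hint

/-- Key one-sided comparison lemma. -/
lemma key_le {T : ℝ} (φ ψ : ℝ → ℝ → ℝ)
    (hφm : ∀ t ∈ Icc (0 : ℝ) T, StrictMono (φ t))
    (hψm : ∀ t ∈ Icc (0 : ℝ) T, StrictMono (ψ t))
    (AR₁ AL₁ AR₂ AL₂ : IFun T)
    (hφ2 : ∀ t ∈ Icc (0:ℝ) T, 0 ≤ φ t (backRem T AR₂ AL₂ t))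
    (hψ1 : ∀ t ∈ Icc (0:ℝ) T, ψ t (backRem T AR₁ AL₁ t) ≤ 0)
    (hR1 : ∀ᵐ t ∂(AR₁.measure.restrict (Icc 0 T)), φ t (backRem T AR₁ AL₁ t) = 0)
    (hL2 : ∀ᵐ t ∂(AL₂.measure.restrict (Icc 0 T)), ψ t (backRem T AR₂ AL₂ t) = 0) :
    ∀ t ∈ Icc (0:ℝ) T, backRem T AR₁ AL₁ t ≤ backRem T AR₂ AL₂ t := by
  intro t₀ ht₀
  by_contra hlt
  push_neg at hlt
  set y1 := backRem T AR₁ AL₁ with hy1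
  set y2 := backRem T AR₂ AL₂ with hy2
  have hy1c : Continuous y1 := continuous_const.sub (AR₁.cont.sub AL₁.cont)
  have hy2c : Continuous y2 := continuous_const.sub (AR₂.cont.sub AL₂.cont)
  set Δ : ℝ → ℝ := fun t => y1 t - y2 t with hΔdef
  have hΔc : Continuous Δ := hy1c.sub hy2c
  have hΔT : Δ T = 0 := by simp [hΔdef, hy1, hy2, backRem]
  have hΔt₀ : 0 < Δ t₀ := by simp only [hΔdef]; linarith
  set S : Set ℝ := Icc t₀ T ∩ {s | Δ s = 0} with hS
  have hTS : T ∈ S := ⟨⟨ht₀.2, le_rfl⟩, hΔT⟩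
  have hSne : S.Nonempty := ⟨T, hTS⟩
  have hSbdd : BddBelow S := ⟨t₀, fun s hs => hs.1.1⟩
  have hScl : IsClosed S := isClosed_Icc.inter (isClosed_eq hΔc continuous_const)
  set τ := sInf S with hτ
  have hτS : τ ∈ S := hScl.csInf_mem hSne hSbdd
  have hτle : t₀ ≤ τ := le_csInf hSne (fun s hs => hs.1.1)
  have hτT : τ ≤ T := hτS.1.2
  have ht₀τ : t₀ < τ := by
    rcases hτle.lt_or_eq with h | h
    · exact h
    · exfalso; rw [← h] at hτS
      have h0 : Δ t₀ = 0 := hτS.2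
      linarith
  have hpos : ∀ s ∈ Ico t₀ τ, 0 < Δ s := by
    intro s hs
    by_contra hneg
    push_neg at hneg
    have hts : t₀ ≤ s := hs.1
    have h0mem : (0:ℝ) ∈ Icc (Δ s) (Δ t₀) := ⟨hneg, hΔt₀.le⟩
    obtain ⟨c, hc, hc0⟩ := intermediate_value_Icc' hts hΔc.continuousOn h0mem
    have hcS : c ∈ S := ⟨⟨hc.1, le_trans hc.2 (le_trans hs.2.le hτT)⟩, hc0⟩
    have := csInf_le hSbdd hcS
    have : τ ≤ s := le_trans this hc.2
    linarith [hs.2]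
  have hIccsub : ∀ s ∈ Ioo t₀ τ, s ∈ Icc (0:ℝ) T :=
    fun s hs => ⟨le_trans ht₀.1 hs.1.le, le_trans hs.2.le hτT⟩
  -- AR₁ is constant on [t₀, τ]
  have hAR1 : AR₁.toFun τ = AR₁.toFun t₀ := by
    apply AR₁.eq_of_measure_Ioo_eq_zero ht₀τ
    have hnull : AR₁.measure.restrict (Icc 0 T) {t | ¬ φ t (y1 t) = 0} = 0 := ae_iff.1 hR1
    have hsub : Ioo t₀ τ ⊆ {t | ¬ φ t (y1 t) = 0} := by
      intro s hs
      have hsIcc := hIccsub s hs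
      have hd : 0 < Δ s := hpos s ⟨hs.1.le, hs.2⟩
      have hmono := (hφm s hsIcc) (show y2 s < y1 s by simp only [hΔdef] at hd; linarith)
      have h2 := hφ2 s hsIcc
      intro h0
      linarith
    have := measure_mono_null hsub hnull
    rwa [Measure.restrict_apply measurableSet_Ioo,
      inter_eq_left.2 (fun s hs => hIccsub s hs)] at this
  -- AL₂ is constant on [t₀, τ]
  have hAL2 : AL₂.toFun τ = AL₂.toFun t₀ := by
    apply AL₂.eq_of_measure_Ioo_eq_zero ht₀τ
    have hnull : AL₂.measure.restrict (Icc 0 T) {t | ¬ ψ t (y2 t) = 0} = 0 := ae_iff.1 hL2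
    have hsub : Ioo t₀ τ ⊆ {t | ¬ ψ t (y2 t) = 0} := by
      intro s hs
      have hsIcc := hIccsub s hs
      have hd : 0 < Δ s := hpos s ⟨hs.1.le, hs.2⟩
      have hmono := (hψm s hsIcc) (show y2 s < y1 s by simp only [hΔdef] at hd; linarith)
      have h1 := hψ1 s hsIcc
      intro h0
      linarith
    have := measure_mono_null hsub hnull
    rwa [Measure.restrict_apply measurableSet_Ioo,
      inter_eq_left.2 (fun s hs => hIccsub s hs)] at this
  -- derive the contradiction
  have hΔτ : Δ τ = 0 := hτS.2
  have hmL1 : AL₁.toFun t₀ ≤ AL₁.toFun τ := AL₁.mono hτle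
  have hmR2 : AR₂.toFun t₀ ≤ AR₂.toFun τ := AR₂.mono hτle
  have e1 : Δ t₀ = y1 t₀ - y2 t₀ := rfl
  have e2 : Δ τ = y1 τ - y2 τ := rfl
  simp only [hy1, hy2, backRem] at e1 e2
  rw [e2] at hΔτ
  rw [e1] at hΔt₀
  linarith

/-- uniqueness of the reflecting function: if, for `i = 1,2`,
`yⁱ(t) = Aⁱ(T) - Aⁱ(t)` with `Aⁱ = A^{R,i} - A^{L,i}` satisfies the constraints
`ψ(t,yⁱ(t)) ≤ 0 ≤ φ(t,yⁱ(t))` and the Skorokhod conditions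
`∫ φ(t,yⁱ(t)) dA^{R,i} = ∫ ψ(t,yⁱ(t)) dA^{L,i} = 0`, then `A¹ ≡ A²` on `[0,T]`. -/
theorem stmt8 (T : ℝ) (hT : 0 < T) (φ ψ : ℝ → ℝ → ℝ)
    (hφc : ContinuousOn (fun p : ℝ × ℝ => φ p.1 p.2) (Icc 0 T ×ˢ univ))
    (hψc : ContinuousOn (fun p : ℝ × ℝ => ψ p.1 p.2) (Icc 0 T ×ˢ univ))
    (hφm : ∀ t ∈ Icc (0 : ℝ) T, StrictMono (φ t))
    (hψm : ∀ t ∈ Icc (0 : ℝ) T, StrictMono (ψ t))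
    (AR₁ AL₁ AR₂ AL₂ : IFun T)
    (hcon₁ : ∀ t ∈ Icc (0 : ℝ) T,
      ψ t (backRem T AR₁ AL₁ t) ≤ 0 ∧ 0 ≤ φ t (backRem T AR₁ AL₁ t))
    (hcon₂ : ∀ t ∈ Icc (0 : ℝ) T,
      ψ t (backRem T AR₂ AL₂ t) ≤ 0 ∧ 0 ≤ φ t (backRem T AR₂ AL₂ t))
    (hskR₁ : (∫ t in Icc 0 T, φ t (backRem T AR₁ AL₁ t) ∂AR₁.measure) = 0)
    (hskL₁ : (∫ t in Icc 0 T, ψ t (backRem T AR₁ AL₁ t) ∂AL₁.measure) = 0)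
    (hskR₂ : (∫ t in Icc 0 T, φ t (backRem T AR₂ AL₂ t) ∂AR₂.measure) = 0)
    (hskL₂ : (∫ t in Icc 0 T, ψ t (backRem T AR₂ AL₂ t) ∂AL₂.measure) = 0) :
    (∀ t ∈ Icc (0 : ℝ) T, backRem T AR₁ AL₁ t = backRem T AR₂ AL₂ t) ∧
      ∀ t ∈ Icc (0 : ℝ) T,
        AR₁.toFun t - AL₁.toFun t = AR₂.toFun t - AL₂.toFun t := by
  have hy1c : Continuous (backRem T AR₁ AL₁) :=
    continuous_const.sub (AR₁.cont.sub AL₁.cont)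
  have hy2c : Continuous (backRem T AR₂ AL₂) :=
    continuous_const.sub (AR₂.cont.sub AL₂.cont)
  -- continuity of the composed integrands on [0,T]
  have hcomp : ∀ (ξ : ℝ → ℝ → ℝ), ContinuousOn (fun p : ℝ × ℝ => ξ p.1 p.2) (Icc 0 T ×ˢ univ) →
      ∀ (y : ℝ → ℝ), Continuous y → ContinuousOn (fun t => ξ t (y t)) (Icc 0 T) := by
    intro ξ hξ y hy
    exact hξ.comp ((continuous_id.prodMk hy).continuousOn)
      (fun t ht => ⟨ht, mem_univ _⟩)
  -- a.e. vanishing statements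
  have hR1 : ∀ᵐ t ∂(AR₁.measure.restrict (Icc 0 T)), φ t (backRem T AR₁ AL₁ t) = 0 :=
    ae_zero_of_setIntegral AR₁ _ (hcomp φ hφc _ hy1c) (fun t ht => (hcon₁ t ht).2) hskR₁
  have hR2 : ∀ᵐ t ∂(AR₂.measure.restrict (Icc 0 T)), φ t (backRem T AR₂ AL₂ t) = 0 :=
    ae_zero_of_setIntegral AR₂ _ (hcomp φ hφc _ hy2c) (fun t ht => (hcon₂ t ht).2) hskR₂
  have hL1 : ∀ᵐ t ∂(AL₁.measure.restrict (Icc 0 T)), ψ t (backRem T AR₁ AL₁ t) = 0 := by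
    have := ae_zero_of_setIntegral AL₁ (fun t => -(ψ t (backRem T AR₁ AL₁ t)))
      ((hcomp ψ hψc _ hy1c).neg) (fun t ht => neg_nonneg.2 (hcon₁ t ht).1)
      (by rw [integral_neg, hskL₁, neg_zero])
    exact this.mono (fun t h => neg_eq_zero.1 h)
  have hL2 : ∀ᵐ t ∂(AL₂.measure.restrict (Icc 0 T)), ψ t (backRem T AR₂ AL₂ t) = 0 := by
    have := ae_zero_of_setIntegral AL₂ (fun t => -(ψ t (backRem T AR₂ AL₂ t)))
      ((hcomp ψ hψc _ hy2c).neg) (fun t ht => neg_nonneg.2 (hcon₂ t ht).1)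
      (by rw [integral_neg, hskL₂, neg_zero])
    exact this.mono (fun t h => neg_eq_zero.1 h)
  have h12 : ∀ t ∈ Icc (0:ℝ) T, backRem T AR₁ AL₁ t ≤ backRem T AR₂ AL₂ t :=
    key_le φ ψ hφm hψm AR₁ AL₁ AR₂ AL₂ (fun t ht => (hcon₂ t ht).2)
      (fun t ht => (hcon₁ t ht).1) hR1 hL2
  have h21 : ∀ t ∈ Icc (0:ℝ) T, backRem T AR₂ AL₂ t ≤ backRem T AR₁ AL₁ t :=
    key_le φ ψ hφm hψm AR₂ AL₂ AR₁ AL₁ (fun t ht => (hcon₁ t ht).2)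
      (fun t ht => (hcon₂ t ht).1) hR2 hL1
  have heq : ∀ t ∈ Icc (0:ℝ) T, backRem T AR₁ AL₁ t = backRem T AR₂ AL₂ t :=
    fun t ht => le_antisymm (h12 t ht) (h21 t ht)
  refine ⟨heq, fun t ht => ?_⟩
  have h0 := heq 0 ⟨le_rfl, hT.le⟩
  have ht' := heq t ht
  simp only [backRem, AR₁.zero_left 0 le_rfl, AL₁.zero_left 0 le_rfl,
    AR₂.zero_left 0 le_rfl, AL₂.zero_left 0 le_rfl] at h0
  simp only [backRem] at ht'
  linarith
end

section
/- Let T > 0, let (Ω, F) be a measurable space and 𝒫 a nonempty collection of probability measures on it, with upper expectation Ê[X] := sup_{P∈𝒫} ∫ X dP. Let {Ỹ_t}_{t∈[0,T]} be a family of measurable functions Ỹ_t : Ω → ℝ, each integrable with respect to every P ∈ 𝒫 with Ê[Ỹ_t] finite. Let L, R : Ω × [0,T] × ℝ → ℝ be such that for every (t,x), the maps ω ↦ L(ω,t,Ỹ_t(ω) − Ê[Ỹ_t] + x) and ω ↦ R(ω,t,Ỹ_t(ω) − Ê[Ỹ_t] + x) are measurable, integrable with respect to every P ∈ 𝒫,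 and have finite upper expectation; define l(t,x) := Ê[L(·,t,Ỹ_t − Ê[Ỹ_t] + x)] and r(t,x) := Ê[R(·,t,Ỹ_t − Ê[Ỹ_t] + x)]. Set a := Ê[Ỹ_T] and s(t) := Ê[Ỹ_0] − Ê[Ỹ_t], assume s ∈ C[0,T], l ≤ r pointwise and l(T,a) ≤ 0 ≤ r(T,a), and suppose (x,k) is a solution of the backward Skorokhod problem BSP_l^r(s,a) with decomposition k = A^R − A^L, A^R, A^L ∈ I[0,T], ∫_0^T l(t,x(t)) dA^L(t) = ∫_0^T r(t,x(t)) dA^R(t) = 0. Define Y_t(ω) := Ỹ_t(ω) + (k(T) − k(t)). Then for all t ∈ [0,T]: Ê[L(·,t,Y_t)] = l(t,x(t)) and Ê[R(·,t,Y_t)] = r(t,x(t)); consequently Ê[L(·,t,Y_t)] ≤ 0 ≤ Ê[R(·,t,Y_t)] for all t ∈ [0,T], and ∫_0^T Ê[R(·,t,Y_t)] dA^R(t) = 0 and ∫_0^T Ê[L(·,t,Y_t)] dA^L(t) = 0. -/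
open MeasureTheory Set
set_option maxHeartbeats 1000000

/-- The upper expectation `Ê[X] = sup_{P ∈ Ps} ∫ X dP` over a family of
probability measures. -/
noncomputable def upperExp {Ω : Type*} [MeasurableSpace Ω]
    (Ps : Set (MeasureTheory.Measure Ω)) (X : Ω → ℝ) : ℝ :=
  sSup ((fun P => ∫ ω, X ω ∂P) '' Ps)

/-- construction of the solution of the doubly mean reflected
equation from the backward Skorokhod problem: with
`l(t,x) = Ê[L(·,t,Ỹ_t - Ê[Ỹ_t] + x)]`, `r(t,x) = Ê[R(·,t,Ỹ_t - Ê[Ỹ_t] + x)]`,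
`a = Ê[Ỹ_T]`, `s(t) = Ê[Ỹ_0] - Ê[Ỹ_t]`, if `(x,k)` solves `BSP_l^r(s,a)` with
decomposition `k = A^R - A^L`, then `Y_t = Ỹ_t + (k(T) - k(t))` satisfies
`Ê[L(·,t,Y_t)] = l(t,x(t))`, `Ê[R(·,t,Y_t)] = r(t,x(t))`, the mean constraints
`Ê[L(·,t,Y_t)] ≤ 0 ≤ Ê[R(·,t,Y_t)]` and the Skorokhod conditions
`∫ Ê[R(·,t,Y_t)] dA^R = ∫ Ê[L(·,t,Y_t)] dA^L = 0`. -/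
theorem stmt9 {Ω : Type*} [MeasurableSpace Ω] (T : ℝ) (hT : 0 < T)
    (Ps : Set (Measure Ω)) (hne : Ps.Nonempty)
    (hprob : ∀ P ∈ Ps, IsProbabilityMeasure P)
    (Yt : ℝ → Ω → ℝ)
    (hmeas : ∀ t ∈ Icc (0 : ℝ) T, Measurable (Yt t))
    (hint : ∀ t ∈ Icc (0 : ℝ) T, ∀ P ∈ Ps, Integrable (Yt t) P)
    (hbdd : ∀ t ∈ Icc (0 : ℝ) T, BddAbove ((fun P => ∫ ω, Yt t ω ∂P) '' Ps))
    (L R : Ω → ℝ → ℝ → ℝ)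
    (hmeasL : ∀ t ∈ Icc (0 : ℝ) T, ∀ x : ℝ,
      Measurable fun ω => L ω t (Yt t ω - upperExp Ps (Yt t) + x))
    (hmeasR : ∀ t ∈ Icc (0 : ℝ) T, ∀ x : ℝ,
      Measurable fun ω => R ω t (Yt t ω - upperExp Ps (Yt t) + x))
    (hintL : ∀ t ∈ Icc (0 : ℝ) T, ∀ x : ℝ, ∀ P ∈ Ps,
      Integrable (fun ω => L ω t (Yt t ω - upperExp Ps (Yt t) + x)) P)
    (hintR : ∀ t ∈ Icc (0 : ℝ) T, ∀ x : ℝ, ∀ P ∈ Ps,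
      Integrable (fun ω => R ω t (Yt t ω - upperExp Ps (Yt t) + x)) P)
    (hbddL : ∀ t ∈ Icc (0 : ℝ) T, ∀ x : ℝ,
      BddAbove ((fun P => ∫ ω, L ω t (Yt t ω - upperExp Ps (Yt t) + x) ∂P) '' Ps))
    (hbddR : ∀ t ∈ Icc (0 : ℝ) T, ∀ x : ℝ,
      BddAbove ((fun P => ∫ ω, R ω t (Yt t ω - upperExp Ps (Yt t) + x) ∂P) '' Ps))
    (l r : ℝ → ℝ → ℝ)
    (hl : ∀ t x : ℝ, l t x = upperExp Ps fun ω => L ω t (Yt t ω - upperExp Ps (Yt t) + x))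
    (hr : ∀ t x : ℝ, r t x = upperExp Ps fun ω => R ω t (Yt t ω - upperExp Ps (Yt t) + x))
    (a : ℝ) (ha : a = upperExp Ps (Yt T))
    (s : ℝ → ℝ) (hsdef : ∀ t : ℝ, s t = upperExp Ps (Yt 0) - upperExp Ps (Yt t))
    (hscont : ContinuousOn s (Icc 0 T))
    (hlr : ∀ t ∈ Icc (0 : ℝ) T, ∀ x : ℝ, l t x ≤ r t x)
    (hla : l T a ≤ 0) (hra : 0 ≤ r T a)
    (x k : ℝ → ℝ) (hsol : IsBSPSolution T l r s a x k)
    (AR AL : IFun T)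
    (hdecomp : ∀ t ∈ Icc (0 : ℝ) T, k t = AR.toFun t - AL.toFun t)
    (hskL : (∫ t in Icc 0 T, l t (x t) ∂AL.measure) = 0)
    (hskR : (∫ t in Icc 0 T, r t (x t) ∂AR.measure) = 0)
    (Y : ℝ → Ω → ℝ) (hY : ∀ t ω, Y t ω = Yt t ω + (k T - k t)) :
    (∀ t ∈ Icc (0 : ℝ) T,
      upperExp Ps (fun ω => L ω t (Y t ω)) = l t (x t) ∧
      upperExp Ps (fun ω => R ω t (Y t ω)) = r t (x t) ∧
      upperExp Ps (fun ω => L ω t (Y t ω)) ≤ 0 ∧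
      0 ≤ upperExp Ps (fun ω => R ω t (Y t ω))) ∧
    (∫ t in Icc 0 T, upperExp Ps (fun ω => R ω t (Y t ω)) ∂AR.measure) = 0 ∧
    (∫ t in Icc 0 T, upperExp Ps (fun ω => L ω t (Y t ω)) ∂AL.measure) = 0 := by
  have key : ∀ t ∈ Icc (0 : ℝ) T,
      (fun ω => Yt t ω - upperExp Ps (Yt t) + x t) = Y t := by
    intro t ht
    funext ω
    have hx := hsol.eqn t ht
    rw [hY, hx, ha, hsdef t, hsdef T]
    ring
  have hLeq : ∀ t ∈ Icc (0 : ℝ) T,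
      upperExp Ps (fun ω => L ω t (Y t ω)) = l t (x t) := by
    intro t ht
    rw [hl]
    congr 1
    funext ω
    rw [← congrFun (key t ht) ω]
  have hReq : ∀ t ∈ Icc (0 : ℝ) T,
      upperExp Ps (fun ω => R ω t (Y t ω)) = r t (x t) := by
    intro t ht
    rw [hr]
    congr 1
    funext ω
    rw [← congrFun (key t ht) ω]
  refine ⟨fun t ht => ⟨hLeq t ht, hReq t ht, ?_, ?_⟩, ?_, ?_⟩
  · rw [hLeq t ht]; exact hsol.lower t ht
  · rw [hReq t ht]; exact hsol.upper t ht
  · refine Eq.trans ?_ hskR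
    exact setIntegral_congr_fun (μ := AR.measure)
      (f := fun t => upperExp Ps (fun ω => R ω t (Y t ω)))
      (g := fun t => r t (x t)) measurableSet_Icc hReq
  · refine Eq.trans ?_ hskL
    exact setIntegral_congr_fun (μ := AL.measure)
      (f := fun t => upperExp Ps (fun ω => L ω t (Y t ω)))
      (g := fun t => l t (x t)) measurableSet_Icc hLeq
end

section
/- Let T > 0. For i = 1, 2, let ψ^i, φ^i : [0,T] × ℝ → ℝ be continuous functions such that ψ^i(t,·) and φ^i(t,·) are strictly increasing for every t ∈ [0,T], and assume ψ^1(t,x) ≤ ψ^2(t,x) and φ^1(t,x) ≤ φ^2(t,x) for all (t,x) ∈ [0,T] × ℝ. For i = 1, 2, let A^{R,i}, A^{L,i} ∈ I[0,T], set A^i := A^{R,i} − A^{L,i} and y^i(t) := A^i(T) − A^i(t), and assume: ψ^i(t, y^i(t)) ≤ 0 ≤ φ^i(t, y^i(t)) for all t ∈ [0,T]; ∫_0^T φ^i(t, y^i(t)) dA^{R,i}(t) = 0 and ∫_0^T ψ^i(t, y^i(t)) dA^{L,i}(t) = 0. Then A^2(T) − A^2(t) ≤ A^1(T) − A^1(t)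 for all t ∈ [0,T]. -/
open MeasureTheory Set

lemma ifun_const_of_pos (T : ℝ) (k : IFun T) (g : ℝ → ℝ)
    (hg : ContinuousOn g (Icc 0 T))
    (hg0 : ∀ t ∈ Icc 0 T, 0 ≤ g t)
    (hint : (∫ t in Icc 0 T, g t ∂k.measure) = 0)
    (a b : ℝ) (hab : a ≤ b) (hsub : Icc a b ⊆ Icc 0 T)
    (hpos : ∀ t ∈ Ioo a b, 0 < g t) :
    k.toFun b = k.toFun a := by
  rcases eq_or_lt_of_le hab with rfl | hlt
  · rfl
  haveI : IsLocallyFiniteMeasure k.measure := by unfold IFun.measure; infer_instance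
  have hInt : IntegrableOn g (Icc 0 T) k.measure := hg.integrableOn_compact isCompact_Icc
  have h0 : 0 ≤ᵐ[k.measure.restrict (Icc 0 T)] g :=
    (ae_restrict_iff' measurableSet_Icc).2 (ae_of_all _ hg0)
  have hae0 : g =ᵐ[k.measure.restrict (Icc 0 T)] 0 :=
    (integral_eq_zero_iff_of_nonneg_ae h0 hInt).mp hint
  have hnull : k.measure.restrict (Icc 0 T) {t | g t ≠ 0} = 0 := by
    have := ae_iff.mp hae0
    simpa using this
  have hsubIoo : Ioo a b ⊆ Icc 0 T := Ioo_subset_Icc_self.trans hsub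
  have hIoo : k.measure (Ioo a b) = 0 := by
    have hr : k.measure (Ioo a b) = k.measure.restrict (Icc 0 T) (Ioo a b) := by
      rw [Measure.restrict_apply measurableSet_Ioo, inter_eq_left.mpr hsubIoo]
    rw [hr]
    refine measure_mono_null (fun t ht => ?_) hnull
    exact (hpos t ht).ne'
  have hll : Function.leftLim k.toFun b = k.toFun b :=
    leftLim_eq_of_tendsto
      ((k.cont.tendsto b).mono_left nhdsWithin_le_nhds)
  have hm : k.measure (Ioo a b) = ENNReal.ofReal (k.toFun b - k.toFun a) := by
    have := k.stieltjes.measure_Ioo (a := a) (b := b)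
    rw [show k.measure = k.stieltjes.measure from rfl, this]
    rw [show Function.leftLim (↑k.stieltjes) b = k.toFun b from hll]
    rfl
  rw [hm] at hIoo
  have := ENNReal.ofReal_eq_zero.mp hIoo
  have h2 := k.mono hab
  linarith

/-- comparison with respect to the boundary functions: if
`ψ¹ ≤ ψ²` and `φ¹ ≤ φ²` pointwise and, for `i = 1,2`,
`yⁱ(t) = Aⁱ(T) - Aⁱ(t)` satisfies the constraints and the Skorokhod conditions
for `(ψⁱ,φⁱ)`, then `A²(T) - A²(t) ≤ A¹(T) - A¹(t)` for all `t ∈ [0,T]`. -/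
theorem stmt10 (T : ℝ) (hT : 0 < T) (φ₁ ψ₁ φ₂ ψ₂ : ℝ → ℝ → ℝ)
    (hφ₁c : ContinuousOn (fun p : ℝ × ℝ => φ₁ p.1 p.2) (Icc 0 T ×ˢ univ))
    (hψ₁c : ContinuousOn (fun p : ℝ × ℝ => ψ₁ p.1 p.2) (Icc 0 T ×ˢ univ))
    (hφ₂c : ContinuousOn (fun p : ℝ × ℝ => φ₂ p.1 p.2) (Icc 0 T ×ˢ univ))
    (hψ₂c : ContinuousOn (fun p : ℝ × ℝ => ψ₂ p.1 p.2) (Icc 0 T ×ˢ univ))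
    (hφ₁m : ∀ t ∈ Icc (0 : ℝ) T, StrictMono (φ₁ t))
    (hψ₁m : ∀ t ∈ Icc (0 : ℝ) T, StrictMono (ψ₁ t))
    (hφ₂m : ∀ t ∈ Icc (0 : ℝ) T, StrictMono (φ₂ t))
    (hψ₂m : ∀ t ∈ Icc (0 : ℝ) T, StrictMono (ψ₂ t))
    (hψle : ∀ t ∈ Icc (0 : ℝ) T, ∀ x : ℝ, ψ₁ t x ≤ ψ₂ t x)
    (hφle : ∀ t ∈ Icc (0 : ℝ) T, ∀ x : ℝ, φ₁ t x ≤ φ₂ t x)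
    (AR₁ AL₁ AR₂ AL₂ : IFun T)
    (hcon₁ : ∀ t ∈ Icc (0 : ℝ) T,
      ψ₁ t (backRem T AR₁ AL₁ t) ≤ 0 ∧ 0 ≤ φ₁ t (backRem T AR₁ AL₁ t))
    (hcon₂ : ∀ t ∈ Icc (0 : ℝ) T,
      ψ₂ t (backRem T AR₂ AL₂ t) ≤ 0 ∧ 0 ≤ φ₂ t (backRem T AR₂ AL₂ t))
    (hskR₁ : (∫ t in Icc 0 T, φ₁ t (backRem T AR₁ AL₁ t) ∂AR₁.measure) = 0)
    (hskL₁ : (∫ t in Icc 0 T, ψ₁ t (backRem T AR₁ AL₁ t) ∂AL₁.measure) = 0)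
    (hskR₂ : (∫ t in Icc 0 T, φ₂ t (backRem T AR₂ AL₂ t) ∂AR₂.measure) = 0)
    (hskL₂ : (∫ t in Icc 0 T, ψ₂ t (backRem T AR₂ AL₂ t) ∂AL₂.measure) = 0) :
    ∀ t ∈ Icc (0 : ℝ) T, backRem T AR₂ AL₂ t ≤ backRem T AR₁ AL₁ t := by
  have hy₁cont : Continuous (backRem T AR₁ AL₁) := by
    unfold backRem; exact continuous_const.sub (AR₁.cont.sub AL₁.cont)
  have hy₂cont : Continuous (backRem T AR₂ AL₂) := by
    unfold backRem; exact continuous_const.sub (AR₂.cont.sub AL₂.cont)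
  intro t₀ ht₀
  by_contra hcon
  push_neg at hcon
  -- hcon : backRem T AR₁ AL₁ t₀ < backRem T AR₂ AL₂ t₀
  set S : Set ℝ := Icc t₀ T ∩ {t | backRem T AR₂ AL₂ t - backRem T AR₁ AL₁ t = 0} with hS
  have hScl : IsClosed S :=
    isClosed_Icc.inter (isClosed_eq (hy₂cont.sub hy₁cont) continuous_const)
  have hTmem : T ∈ S := by
    constructor
    · exact ⟨ht₀.2, le_refl T⟩
    · simp [backRem]
  have hne : S.Nonempty := ⟨T, hTmem⟩
  have hbdd : BddBelow S := ⟨t₀, fun x hx => hx.1.1⟩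
  set s := sInf S with hsdef
  have hs_mem : s ∈ S := hScl.csInf_mem hne hbdd
  have hts : t₀ ≤ s := le_csInf hne (fun x hx => hx.1.1)
  have hsT : s ≤ T := hs_mem.1.2
  have hfs : backRem T AR₂ AL₂ s - backRem T AR₁ AL₁ s = 0 := hs_mem.2
  have hsub : Icc t₀ s ⊆ Icc 0 T := fun x hx => ⟨le_trans ht₀.1 hx.1, le_trans hx.2 hsT⟩
  have hpos : ∀ t ∈ Ico t₀ s, backRem T AR₁ AL₁ t < backRem T AR₂ AL₂ t := by
    intro t ht
    by_contra hle
    push_neg at hle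
    have hmem : (0:ℝ) ∈ Icc (backRem T AR₂ AL₂ t - backRem T AR₁ AL₁ t)
        (backRem T AR₂ AL₂ t₀ - backRem T AR₁ AL₁ t₀) := ⟨by linarith, by linarith⟩
    obtain ⟨c, hc, hfc⟩ := intermediate_value_Icc' ht.1
      ((hy₂cont.sub hy₁cont).continuousOn) hmem
    have hcS : c ∈ S := ⟨⟨hc.1, le_trans hc.2 (le_trans (le_of_lt ht.2) hsT)⟩, hfc⟩
    have := csInf_le hbdd hcS
    have : c < s := lt_of_le_of_lt hc.2 ht.2
    linarith [csInf_le hbdd hcS]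
  have hg₂c : ContinuousOn (fun t => φ₂ t (backRem T AR₂ AL₂ t)) (Icc 0 T) := by
    apply hφ₂c.comp ((continuous_id.prodMk hy₂cont).continuousOn)
    intro t ht; exact ⟨ht, mem_univ _⟩
  have hg₁c : ContinuousOn (fun t => -ψ₁ t (backRem T AR₁ AL₁ t)) (Icc 0 T) := by
    apply ContinuousOn.neg
    apply hψ₁c.comp ((continuous_id.prodMk hy₁cont).continuousOn)
    intro t ht; exact ⟨ht, mem_univ _⟩
  have hAR₂ : AR₂.toFun s = AR₂.toFun t₀ := by
    apply ifun_const_of_pos T AR₂ _ hg₂c (fun t ht => (hcon₂ t ht).2) hskR₂ t₀ s hts hsub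
    intro t ht
    have htI : t ∈ Icc 0 T := hsub (Ioo_subset_Icc_self ht)
    have h1 := hpos t ⟨le_of_lt ht.1, ht.2⟩
    calc (0:ℝ) ≤ φ₁ t (backRem T AR₁ AL₁ t) := (hcon₁ t htI).2
      _ ≤ φ₂ t (backRem T AR₁ AL₁ t) := hφle t htI _
      _ < φ₂ t (backRem T AR₂ AL₂ t) := hφ₂m t htI h1
  have hAL₁ : AL₁.toFun s = AL₁.toFun t₀ := by
    apply ifun_const_of_pos T AL₁ _ hg₁c
      (fun t ht => neg_nonneg.mpr (hcon₁ t ht).1) ?_ t₀ s hts hsub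
    · intro t ht
      have htI : t ∈ Icc 0 T := hsub (Ioo_subset_Icc_self ht)
      have h1 := hpos t ⟨le_of_lt ht.1, ht.2⟩
      have : ψ₁ t (backRem T AR₁ AL₁ t) < 0 :=
        calc ψ₁ t (backRem T AR₁ AL₁ t) < ψ₁ t (backRem T AR₂ AL₂ t) := hψ₁m t htI h1
          _ ≤ ψ₂ t (backRem T AR₂ AL₂ t) := hψle t htI _
          _ ≤ 0 := (hcon₂ t htI).1
      linarith
    · rw [integral_neg, hskL₁, neg_zero]
  have hmono2 : AL₂.toFun t₀ ≤ AL₂.toFun s := AL₂.mono hts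
  have hmono1 : AR₁.toFun t₀ ≤ AR₁.toFun s := AR₁.mono hts
  simp only [backRem] at hcon hfs
  linarith
end

section
/- Let T > 0, let (Ω, F) be a measurable space and 𝒫 a nonempty collection of probability measures on it, with upper expectation Ê[X] := sup_{P∈𝒫} ∫ X dP. Let L, R : Ω × [0,T] × ℝ → ℝ satisfy |L(ω,t,x) − L(ω,t,y)| ≤ C|x − y| and |R(ω,t,x) − R(ω,t,y)| ≤ C|x − y| for all ω, t, x, y, where C > 0. For i = 1, 2, let {Ỹ^i_t}_{t∈[0,T]} be a family of measurable functions Ω → ℝ, each integrable with respect to every P ∈ 𝒫, with Ê[Ỹ^i_t] finite and sup_{t∈[0,T]} Ê[|Ỹ^1_t − Ỹ^2_t|] < ∞; define a^i := Ê[Ỹ^i_T], s^i(t) := Ê[Ỹ^i_0] − Ê[Ỹ^i_t], l^i(t,x) := Ê[L(·,t,Ỹ^i_t − Ê[Ỹ^i_t] + x)] and r^i(t,x) := Ê[R(·,t,Ỹ^i_t − Ê[Ỹ^i_t] + x)], assumed to be finite for all (t,x). Assume s^i ∈ C[0,T], that l^i, r^i satisfy Assumption (A) with constants 0 < c < C,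 that l^i(T,a^i) ≤ 0 ≤ r^i(T,a^i), and let (x^i, A^i) be a solution of the backward Skorokhod problem BSP_{l^i}^{r^i}(s^i, a^i). Then there exists a constant K depending only on c and C such that sup_{t∈[0,T]} |A^1(t) − A^2(t)| ≤ K · sup_{t∈[0,T]} Ê[|Ỹ^1_t − Ỹ^2_t|]. -/
open MeasureTheory Set

open Filter in
/-- Auxiliary: lower Lipschitz bound plus strict monotonicity gives a linear lower bound
on increments. -/
private lemma lip_lower_mono {T c : ℝ} {f : ℝ → ℝ → ℝ}
    (hmono : ∀ t ∈ Icc (0 : ℝ) T, StrictMono (f t))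
    (hlip : ∀ t ∈ Icc (0 : ℝ) T, ∀ x y : ℝ, c * |x - y| ≤ |f t x - f t y|)
    {t : ℝ} (ht : t ∈ Icc (0 : ℝ) T) {x y : ℝ} (hxy : x ≤ y) :
    c * (y - x) ≤ f t y - f t x := by
  rcases eq_or_lt_of_le hxy with rfl | h
  · simp
  · have h1 := hlip t ht y x
    rw [abs_of_pos (sub_pos.2 h), abs_of_pos (sub_pos.2 (hmono t ht h))] at h1
    exact h1

/-- Auxiliary: if a nonnegative function integrates to zero against the measure of an
`IFun` and is strictly positive on `Ioo t₀ t₁ ⊆ Icc 0 T`, then the `IFun` is flat on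
`[t₀, t₁]`. -/
private lemma flat_of_pos {T : ℝ} (k : IFun T) (g : ℝ → ℝ)
    (hgc : ContinuousOn g (Icc 0 T)) (hg0 : ∀ u ∈ Icc (0 : ℝ) T, 0 ≤ g u)
    (hint : (∫ u in Icc 0 T, g u ∂k.measure) = 0)
    {t₀ t₁ : ℝ} (h0 : 0 ≤ t₀) (h01 : t₀ ≤ t₁) (h1T : t₁ ≤ T)
    (hpos : ∀ u ∈ Ioo t₀ t₁, 0 < g u) :
    k.toFun t₁ = k.toFun t₀ := by
  rcases eq_or_lt_of_le h01 with rfl | _hlt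
  · rfl
  have hIccsub : Ioo t₀ t₁ ⊆ Icc (0 : ℝ) T := fun u hu =>
    ⟨h0.trans hu.1.le, hu.2.le.trans h1T⟩
  haveI : IsLocallyFiniteMeasure k.measure :=
    inferInstanceAs (IsLocallyFiniteMeasure k.stieltjes.measure)
  have hinteg : IntegrableOn g (Icc 0 T) k.measure :=
    hgc.integrableOn_compact (μ := k.measure) isCompact_Icc
  have hae : g =ᵐ[k.measure.restrict (Icc 0 T)] 0 := by
    refine (integral_eq_zero_iff_of_nonneg_ae ?_ hinteg).1 hint
    exact (ae_restrict_iff' measurableSet_Icc).2 (Filter.Eventually.of_forall hg0)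
  have hnull : (k.measure.restrict (Icc 0 T)) {u | g u ≠ 0} = 0 := by
    rw [Filter.EventuallyEq, ae_iff] at hae
    simpa only [Pi.zero_apply] using hae
  have hIoo : k.measure (Ioo t₀ t₁) = 0 := by
    have h1 : k.measure.restrict (Icc 0 T) (Ioo t₀ t₁) = 0 :=
      measure_mono_null (fun u hu => (hpos u hu).ne') hnull
    rwa [Measure.restrict_apply' measurableSet_Icc, inter_eq_left.2 hIccsub] at h1
  have hm : k.stieltjes.measure (Ioo t₀ t₁) = 0 := hIoo
  rw [StieltjesFunction.measure_Ioo] at hm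
  have hmono : Monotone (⇑k.stieltjes) := k.mono
  have hL := hmono.continuousWithinAt_Iio_iff_leftLim_eq.1
      (k.cont.continuousWithinAt :
        ContinuousWithinAt (⇑k.stieltjes) (Iio t₁) t₁)
  rw [hL] at hm
  have h3 : k.toFun t₁ - k.toFun t₀ ≤ 0 := ENNReal.ofReal_eq_zero.1 hm
  exact le_antisymm (by linarith) (k.mono h01)

open Filter in
/-- Auxiliary: continuity on `Icc 0 T` of `u ↦ f u (x u)` from continuity of `f` in the
time variable, uniform Lipschitz continuity in the space variable, and continuity of `x`. -/
private lemma contOn_comp_s12 {T C : ℝ} {f : ℝ → ℝ → ℝ} {x : ℝ → ℝ}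
    (hft : ∀ y : ℝ, ContinuousOn (fun u => f u y) (Icc 0 T))
    (hfl : ∀ u ∈ Icc (0 : ℝ) T, ∀ y z : ℝ, |f u y - f u z| ≤ C * |y - z|)
    (hx : ContinuousOn x (Icc 0 T)) :
    ContinuousOn (fun u => f u (x u)) (Icc 0 T) := by
  intro t₀ ht₀
  have h1 : Tendsto (fun u => f u (x t₀)) (nhdsWithin t₀ (Icc (0 : ℝ) T))
      (nhds (f t₀ (x t₀))) := hft (x t₀) t₀ ht₀
  have h2 : Tendsto (fun u => f u (x u) - f u (x t₀)) (nhdsWithin t₀ (Icc (0 : ℝ) T))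
      (nhds 0) := by
    have hb : ∀ᶠ u in nhdsWithin t₀ (Icc (0 : ℝ) T),
        ‖f u (x u) - f u (x t₀)‖ ≤ C * |x u - x t₀| := by
      filter_upwards [eventually_mem_nhdsWithin] with u hu
      simpa [Real.norm_eq_abs] using hfl u hu (x u) (x t₀)
    have h3 : Tendsto (fun u => C * |x u - x t₀|) (nhdsWithin t₀ (Icc (0 : ℝ) T))
        (nhds (C * |x t₀ - x t₀|)) :=
      (((hx t₀ ht₀).sub tendsto_const_nhds).abs).const_mul C
    have h3' : Tendsto (fun u => C * |x u - x t₀|) (nhdsWithin t₀ (Icc (0 : ℝ) T))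
        (nhds 0) := by simpa using h3
    exact squeeze_zero_norm' hb h3'
  have h4 := h2.add h1
  simpa [ContinuousWithinAt] using h4

/-- Auxiliary: the key "cross" lemma comparing two upper expectations built from the same
pointwise data; non-integrable integrals are `0`, which forces nonnegativity of the sup. -/
private lemma cross_lemma {Ω : Type} [MeasurableSpace Ω] {Ps : Set (Measure Ω)}
    (hne : Ps.Nonempty) (F₁ F₂ : Ω → ℝ) (E : ℝ)
    (hB₁ : BddAbove ((fun P => ∫ ω, F₁ ω ∂P) '' Ps))
    (hpair : ∀ P ∈ Ps, Integrable F₁ P → Integrable F₂ P →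
      (∫ ω, F₂ ω ∂P) - ∫ ω, F₁ ω ∂P ≤ E)
    (h2 : 0 < upperExp Ps F₂)
    (h12 : upperExp Ps F₁ + E < upperExp Ps F₂) :
    0 ≤ upperExp Ps F₁ := by
  simp only [upperExp] at h2 h12 ⊢
  by_contra hneg
  push_neg at hneg
  have hmax : max 0 (sSup ((fun P => ∫ ω, F₁ ω ∂P) '' Ps) + E) <
      sSup ((fun P => ∫ ω, F₂ ω ∂P) '' Ps) := max_lt h2 h12
  obtain ⟨v, ⟨P, hP, rfl⟩, hvgt⟩ := exists_lt_of_lt_csSup (hne.image _) hmax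
  replace hvgt : max 0 (sSup ((fun P => ∫ ω, F₁ ω ∂P) '' Ps) + E) < ∫ ω, F₂ ω ∂P := hvgt
  have hIF₂ : Integrable F₂ P := by
    by_contra h
    rw [integral_undef h] at hvgt
    exact (le_max_left 0 _).not_gt hvgt
  have hIF₁ : Integrable F₁ P := by
    by_contra h
    have h0 : (∫ ω, F₁ ω ∂P) = 0 := integral_undef h
    have hle : (∫ ω, F₁ ω ∂P) ≤ sSup ((fun P => ∫ ω, F₁ ω ∂P) '' Ps) :=
      le_csSup hB₁ ⟨P, hP, rfl⟩
    rw [h0] at hle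
    linarith
  have hle : (∫ ω, F₁ ω ∂P) ≤ sSup ((fun P => ∫ ω, F₁ ω ∂P) '' Ps) :=
    le_csSup hB₁ ⟨P, hP, rfl⟩
  have hp := hpair P hP hIF₁ hIF₂
  have := le_max_right (0 : ℝ) (sSup ((fun P => ∫ ω, F₁ ω ∂P) '' Ps) + E)
  linarith

/-- Auxiliary: quantitative closeness of the two integrals for an "honest" (doubly
integrable) probability measure. -/
private lemma pair_bound {Ω : Type} [MeasurableSpace Ω] (P : Measure Ω)
    [IsProbabilityMeasure P] {C Dε : ℝ} (hC : 0 ≤ C)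
    {Z₁ Z₂ F₁ F₂ : Ω → ℝ}
    (hZ₁ : Integrable Z₁ P) (hZ₂ : Integrable Z₂ P)
    (hZd : (∫ ω, |Z₁ ω - Z₂ ω| ∂P) ≤ Dε)
    (hFlip : ∀ ω, |F₂ ω - F₁ ω| ≤ C * (|Z₁ ω - Z₂ ω| + Dε))
    (hIF₁ : Integrable F₁ P) (hIF₂ : Integrable F₂ P) :
    |(∫ ω, F₂ ω ∂P) - ∫ ω, F₁ ω ∂P| ≤ C * (Dε + Dε) := by
  rw [← integral_sub hIF₂ hIF₁]
  have hgint : Integrable (fun ω => C * (|Z₁ ω - Z₂ ω| + Dε)) P :=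
    ((hZ₁.sub hZ₂).abs.add (integrable_const Dε)).const_mul C
  have h0 : |∫ ω, (F₂ ω - F₁ ω) ∂P| ≤ ∫ ω, |F₂ ω - F₁ ω| ∂P := by
    simpa [Real.norm_eq_abs] using
      norm_integral_le_integral_norm (μ := P) (fun ω => F₂ ω - F₁ ω)
  have h1 : (∫ ω, |F₂ ω - F₁ ω| ∂P) ≤ ∫ ω, C * (|Z₁ ω - Z₂ ω| + Dε) ∂P :=
    integral_mono (hIF₂.sub hIF₁).abs hgint hFlip
  have h2 : (∫ ω, C * (|Z₁ ω - Z₂ ω| + Dε) ∂P)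
      = C * ((∫ ω, |Z₁ ω - Z₂ ω| ∂P) + Dε) := by
    have habs : Integrable (fun ω => |Z₁ ω - Z₂ ω|) P := (hZ₁.sub hZ₂).abs
    rw [integral_const_mul, integral_add habs (integrable_const _), integral_const]
    simp
  have h3 : C * ((∫ ω, |Z₁ ω - Z₂ ω| ∂P) + Dε) ≤ C * (Dε + Dε) := by
    apply mul_le_mul_of_nonneg_left _ hC
    linarith
  linarith

/-- Auxiliary: the main one-sided comparison estimate for two backward Skorokhod
problems whose boundary functions satisfy the cross inequalities. -/
private lemma key_half (T c E d : ℝ) (hc : 0 < c) (hE : 0 < E) (hdB : d ≤ 2 * E / c)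
    (l₁ r₁ l₂ r₂ : ℝ → ℝ → ℝ) (s₁ s₂ : ℝ → ℝ) (a₁ a₂ : ℝ) (x₁ k₁ x₂ k₂ : ℝ → ℝ)
    (hsol₁ : IsBSPSolution T l₁ r₁ s₁ a₁ x₁ k₁)
    (hsol₂ : IsBSPSolution T l₂ r₂ s₂ a₂ x₂ k₂)
    (hl₁c : ∀ u ∈ Icc (0 : ℝ) T, ∀ x y : ℝ, x ≤ y → c * (y - x) ≤ l₁ u y - l₁ u x)
    (hr₁c : ∀ u ∈ Icc (0 : ℝ) T, ∀ x y : ℝ, x ≤ y → c * (y - x) ≤ r₁ u y - r₁ u x)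
    (hl₂c : ∀ u ∈ Icc (0 : ℝ) T, ∀ x y : ℝ, x ≤ y → c * (y - x) ≤ l₂ u y - l₂ u x)
    (hr₂c : ∀ u ∈ Icc (0 : ℝ) T, ∀ x y : ℝ, x ≤ y → c * (y - x) ≤ r₂ u y - r₂ u x)
    (hCLr : ∀ u ∈ Icc (0 : ℝ) T, ∀ y : ℝ, 0 < r₂ u y → r₁ u y + E < r₂ u y → 0 ≤ r₁ u y)
    (hCLl : ∀ u ∈ Icc (0 : ℝ) T, ∀ y : ℝ, 0 < l₂ u y → l₁ u y + E < l₂ u y → 0 ≤ l₁ u y)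
    (hcr₁ : ContinuousOn (fun u => r₁ u (x₁ u)) (Icc 0 T))
    (hcl₂ : ContinuousOn (fun u => l₂ u (x₂ u)) (Icc 0 T))
    (hv : ∀ u ∈ Icc (0 : ℝ) T, |(a₁ + s₁ T - s₁ u) - (a₂ + s₂ T - s₂ u)| ≤ d) :
    ∀ u ∈ Icc (0 : ℝ) T, x₁ u - x₂ u ≤ 2 * E / c + 2 * d := by
  intro t₀ ht₀
  by_contra hcon
  push_neg at hcon
  have hT0 : (0 : ℝ) ≤ T := ht₀.1.trans ht₀.2
  have hTm : T ∈ Icc (0 : ℝ) T := ⟨hT0, le_refl T⟩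
  have hd0 : 0 ≤ d := le_trans (abs_nonneg _) (hv T hTm)
  have hB0 : 0 < 2 * E / c := by positivity
  have hx₁T : x₁ T = a₁ := by linarith [hsol₁.eqn T hTm]
  have hx₂T : x₂ T = a₂ := by linarith [hsol₂.eqn T hTm]
  have haa : a₁ - a₂ ≤ d := by
    have h := (abs_le.1 (hv T hTm)).2
    linarith
  -- the first time after t₀ where the gap drops below `B`
  set S : Set ℝ := Icc t₀ T ∩ (fun u => x₁ u - x₂ u) ⁻¹' Iic (2 * E / c) with hSdef
  have hsub : Icc t₀ T ⊆ Icc (0 : ℝ) T := Icc_subset_Icc ht₀.1 le_rfl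
  have hTS : T ∈ S := by
    constructor
    · exact ⟨ht₀.2, le_refl T⟩
    · simp only [mem_preimage, mem_Iic]
      rw [hx₁T, hx₂T]
      linarith
  have hSne : S.Nonempty := ⟨T, hTS⟩
  have hSbd : BddBelow S := ⟨t₀, fun u hu => hu.1.1⟩
  have hSclosed : IsClosed S :=
    ((hsol₁.x_cont.sub hsol₂.x_cont).mono hsub).preimage_isClosed_of_isClosed
      isClosed_Icc isClosed_Iic
  set t₁ := sInf S with ht₁def
  have ht₁S : t₁ ∈ S := hSclosed.csInf_mem hSne hSbd
  have ht₀1 : t₀ ≤ t₁ := ht₁S.1.1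
  have ht₁T : t₁ ≤ T := ht₁S.1.2
  have hφt₁ : x₁ t₁ - x₂ t₁ ≤ 2 * E / c := ht₁S.2
  have ht₁Icc : t₁ ∈ Icc (0 : ℝ) T := ⟨ht₀.1.trans ht₀1, ht₁T⟩
  have hgtB : ∀ u ∈ Ico t₀ t₁, 2 * E / c < x₁ u - x₂ u := by
    intro u hu
    by_contra hle
    push_neg at hle
    have huS : u ∈ S := ⟨⟨hu.1, hu.2.le.trans ht₁T⟩, hle⟩
    exact absurd (csInf_le hSbd huS) (not_le.2 hu.2)
  have ht₀1' : t₀ < t₁ := by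
    rcases lt_or_eq_of_le ht₀1 with h | heq
    · exact h
    · exfalso
      rw [← heq] at hφt₁
      linarith
  -- on `Ioo t₀ t₁`, the constraints are strict
  have hr₁pos : ∀ u ∈ Ioo t₀ t₁, 0 < r₁ u (x₁ u) := by
    intro u hu
    have huI : u ∈ Icc (0 : ℝ) T := ⟨ht₀.1.trans hu.1.le, hu.2.le.trans ht₁T⟩
    have hBu : 2 * E / c < x₁ u - x₂ u := hgtB u ⟨hu.1.le, hu.2⟩
    have hEc : c * (E / c) = E := by field_simp
    have hEc2 : E / c < 2 * E / c := by
      rw [div_lt_div_iff₀ hc hc]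
      nlinarith
    have hy2 : x₂ u ≤ x₂ u + E / c := by linarith [div_pos hE hc]
    have hr₂y : E ≤ r₂ u (x₂ u + E / c) := by
      have h1 := hr₂c u huI (x₂ u) (x₂ u + E / c) hy2
      have h2 := hsol₂.upper u huI
      have h3 : c * (x₂ u + E / c - x₂ u) = E := by field_simp; ring
      linarith
    have hr₁y : 0 ≤ r₁ u (x₂ u + E / c) := by
      by_contra hneg
      push_neg at hneg
      have := hCLr u huI (x₂ u + E / c) (lt_of_lt_of_le hE hr₂y) (by linarith)
      linarith
    have hxy : x₂ u + E / c < x₁ u := by linarith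
    have h4 := hr₁c u huI (x₂ u + E / c) (x₁ u) hxy.le
    nlinarith [mul_pos hc (sub_pos.2 hxy)]
  have hl₂neg : ∀ u ∈ Ioo t₀ t₁, l₂ u (x₂ u) < 0 := by
    intro u hu
    have huI : u ∈ Icc (0 : ℝ) T := ⟨ht₀.1.trans hu.1.le, hu.2.le.trans ht₁T⟩
    have hBu : 2 * E / c < x₁ u - x₂ u := hgtB u ⟨hu.1.le, hu.2⟩
    have h32 : 3 * E / (2 * c) < 2 * E / c := by
      rw [div_lt_div_iff₀ (by positivity) hc]
      nlinarith
    have hyx₁ : x₂ u + 3 * E / (2 * c) < x₁ u := by linarith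
    have hl₁y : l₁ u (x₂ u + 3 * E / (2 * c)) ≤ -(E / 2) := by
      have h1 := hl₁c u huI (x₂ u + 3 * E / (2 * c)) (x₁ u) hyx₁.le
      have h2 := hsol₁.lower u huI
      have h3 : E / 2 ≤ c * (x₁ u - (x₂ u + 3 * E / (2 * c))) := by
        have h4 : x₁ u - (x₂ u + 3 * E / (2 * c)) ≥ E / (2 * c) := by
          have : 2 * E / c - 3 * E / (2 * c) = E / (2 * c) := by
            field_simp
            ring
          linarith
        have h5 : c * (E / (2 * c)) = E / 2 := by field_simp
        nlinarith
      linarith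
    have hl₂y : l₂ u (x₂ u + 3 * E / (2 * c)) ≤ E := by
      by_contra h
      push_neg at h
      have := hCLl u huI (x₂ u + 3 * E / (2 * c)) (hE.trans h) (by linarith)
      linarith
    have h6 := hl₂c u huI (x₂ u) (x₂ u + 3 * E / (2 * c))
      (by linarith [div_pos (show (0 : ℝ) < 3 * E by linarith) (show (0 : ℝ) < 2 * c by linarith)])
    have h7 : c * (x₂ u + 3 * E / (2 * c) - x₂ u) = 3 * E / 2 := by
      field_simp
      ring
    linarith
  -- flatness of the relevant reflecting parts on `[t₀, t₁]`
  obtain ⟨kr₁, kl₁, hk₁eq, hl₁int, hr₁int⟩ := hsol₁.decomp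
  obtain ⟨kr₂, kl₂, hk₂eq, hl₂int, hr₂int⟩ := hsol₂.decomp
  have hflat₁ : kr₁.toFun t₁ = kr₁.toFun t₀ :=
    flat_of_pos kr₁ (fun u => r₁ u (x₁ u)) hcr₁ hsol₁.upper hr₁int
      ht₀.1 ht₀1 ht₁T hr₁pos
  have hflat₂ : kl₂.toFun t₁ = kl₂.toFun t₀ := by
    refine flat_of_pos kl₂ (fun u => -(l₂ u (x₂ u))) hcl₂.neg
      (fun u hu => neg_nonneg.2 (hsol₂.lower u hu)) ?_ ht₀.1 ht₀1 ht₁T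
      (fun u hu => neg_pos.2 (hl₂neg u hu))
    rw [integral_neg, hl₂int, neg_zero]
  -- final contradiction
  have e10 := hsol₁.eqn t₀ ht₀
  have e11 := hsol₁.eqn t₁ ht₁Icc
  have e20 := hsol₂.eqn t₀ ht₀
  have e21 := hsol₂.eqn t₁ ht₁Icc
  have d10 := hk₁eq t₀ ht₀
  have d11 := hk₁eq t₁ ht₁Icc
  have d20 := hk₂eq t₀ ht₀
  have d21 := hk₂eq t₁ ht₁Icc
  have m1 : kl₁.toFun t₀ ≤ kl₁.toFun t₁ := kl₁.mono ht₀1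
  have m2 : kr₂.toFun t₀ ≤ kr₂.toFun t₁ := kr₂.mono ht₀1
  have hv0 := abs_le.1 (hv t₀ ht₀)
  have hv1 := abs_le.1 (hv t₁ ht₁Icc)
  have hv0' := hv0.1
  have hv0'' := hv0.2
  have hv1' := hv1.1
  have hv1'' := hv1.2
  linarith

/-- Auxiliary: an element bound for `upperExp`. -/
private lemma le_upperExp {Ω : Type} [MeasurableSpace Ω] {Ps : Set (Measure Ω)}
    {X : Ω → ℝ} {P : Measure Ω} (hP : P ∈ Ps)
    (hB : BddAbove ((fun P => ∫ ω, X ω ∂P) '' Ps)) :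
    (∫ ω, X ω ∂P) ≤ upperExp Ps X :=
  le_csSup hB ⟨P, hP, rfl⟩

/-- Auxiliary: an upper bound for `upperExp`. -/
private lemma upperExp_le {Ω : Type} [MeasurableSpace Ω] {Ps : Set (Measure Ω)}
    {X : Ω → ℝ} {M : ℝ} (hne : Ps.Nonempty)
    (h : ∀ P ∈ Ps, (∫ ω, X ω ∂P) ≤ M) :
    upperExp Ps X ≤ M := by
  apply csSup_le (hne.image _)
  rintro v ⟨P, hP, rfl⟩
  exact h P hP

/-- estimate for the difference of the reflecting functions of
two doubly mean reflected problems: there is a constant `K`, depending only on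
`c` and `C`, such that for any data as below,
`sup_t |A¹(t) - A²(t)| ≤ K · sup_t Ê[|Ỹ¹_t - Ỹ²_t|]`. -/
theorem stmt12 (c C : ℝ) (hc : 0 < c) (hcC : c < C) :
    ∃ K : ℝ, 0 ≤ K ∧
      ∀ T : ℝ, 0 < T →
      ∀ (Ω : Type) [MeasurableSpace Ω] (Ps : Set (Measure Ω)),
        Ps.Nonempty → (∀ P ∈ Ps, IsProbabilityMeasure P) →
        ∀ L R : Ω → ℝ → ℝ → ℝ,
        (∀ ω : Ω, ∀ t ∈ Icc (0 : ℝ) T, ∀ x y : ℝ, |L ω t x - L ω t y| ≤ C * |x - y|) →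
        (∀ ω : Ω, ∀ t ∈ Icc (0 : ℝ) T, ∀ x y : ℝ, |R ω t x - R ω t y| ≤ C * |x - y|) →
        ∀ Y₁ Y₂ : ℝ → Ω → ℝ,
        (∀ t ∈ Icc (0 : ℝ) T, Measurable (Y₁ t) ∧ Measurable (Y₂ t)) →
        (∀ t ∈ Icc (0 : ℝ) T, ∀ P ∈ Ps, Integrable (Y₁ t) P ∧ Integrable (Y₂ t) P) →
        (∀ t ∈ Icc (0 : ℝ) T, BddAbove ((fun P => ∫ ω, Y₁ t ω ∂P) '' Ps) ∧
          BddAbove ((fun P => ∫ ω, Y₂ t ω ∂P) '' Ps)) →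
        (∀ t ∈ Icc (0 : ℝ) T,
          BddAbove ((fun P => ∫ ω, |Y₁ t ω - Y₂ t ω| ∂P) '' Ps)) →
        ∀ l₁ r₁ l₂ r₂ : ℝ → ℝ → ℝ,
        (∀ t x : ℝ, l₁ t x = upperExp Ps fun ω => L ω t (Y₁ t ω - upperExp Ps (Y₁ t) + x)) →
        (∀ t x : ℝ, r₁ t x = upperExp Ps fun ω => R ω t (Y₁ t ω - upperExp Ps (Y₁ t) + x)) →
        (∀ t x : ℝ, l₂ t x = upperExp Ps fun ω => L ω t (Y₂ t ω - upperExp Ps (Y₂ t) + x)) →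
        (∀ t x : ℝ, r₂ t x = upperExp Ps fun ω => R ω t (Y₂ t ω - upperExp Ps (Y₂ t) + x)) →
        (∀ t x : ℝ, BddAbove ((fun P => ∫ ω, L ω t (Y₁ t ω - upperExp Ps (Y₁ t) + x) ∂P) '' Ps)) →
        (∀ t x : ℝ, BddAbove ((fun P => ∫ ω, R ω t (Y₁ t ω - upperExp Ps (Y₁ t) + x) ∂P) '' Ps)) →
        (∀ t x : ℝ, BddAbove ((fun P => ∫ ω, L ω t (Y₂ t ω - upperExp Ps (Y₂ t) + x) ∂P) '' Ps)) →
        (∀ t x : ℝ, BddAbove ((fun P => ∫ ω, R ω t (Y₂ t ω - upperExp Ps (Y₂ t) + x) ∂P) '' Ps)) →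
        AssumptionA T c C l₁ r₁ → AssumptionA T c C l₂ r₂ →
        ∀ s₁ s₂ : ℝ → ℝ,
        (∀ t : ℝ, s₁ t = upperExp Ps (Y₁ 0) - upperExp Ps (Y₁ t)) →
        (∀ t : ℝ, s₂ t = upperExp Ps (Y₂ 0) - upperExp Ps (Y₂ t)) →
        ContinuousOn s₁ (Icc 0 T) → ContinuousOn s₂ (Icc 0 T) →
        ∀ a₁ a₂ : ℝ, a₁ = upperExp Ps (Y₁ T) → a₂ = upperExp Ps (Y₂ T) →
        l₁ T a₁ ≤ 0 → 0 ≤ r₁ T a₁ → l₂ T a₂ ≤ 0 → 0 ≤ r₂ T a₂ →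
        ∀ x₁ A₁ x₂ A₂ : ℝ → ℝ,
        IsBSPSolution T l₁ r₁ s₁ a₁ x₁ A₁ → IsBSPSolution T l₂ r₂ s₂ a₂ x₂ A₂ →
        ∀ D : ℝ,
        (∀ t ∈ Icc (0 : ℝ) T, upperExp Ps (fun ω => |Y₁ t ω - Y₂ t ω|) ≤ D) →
        ∀ t ∈ Icc (0 : ℝ) T, |A₁ t - A₂ t| ≤ K * D := by
  have hC0 : 0 < C := hc.trans hcC
  refine ⟨8 * C / c + 6, le_of_lt (by positivity), ?_⟩
  intro T hT Ω mΩ Ps hPsne hPsprob L R hL hR Y₁ Y₂ hYmeas hYint hYbdd hYdBdd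
    l₁ r₁ l₂ r₂ hl₁ hr₁ hl₂ hr₂ hbL₁ hbR₁ hbL₂ hbR₂ hA₁ hA₂ s₁ s₂ hs₁ hs₂ hs₁c hs₂c
    a₁ a₂ ha₁ ha₂ hla₁ hra₁ hla₂ hra₂ x₁ A₁ x₂ A₂ hsol₁ hsol₂ D hD t ht
  have hT0 : (0 : ℝ) ≤ T := hT.le
  have h0Icc : (0 : ℝ) ∈ Icc (0 : ℝ) T := ⟨le_refl 0, hT0⟩
  have hTIcc : T ∈ Icc (0 : ℝ) T := ⟨hT0, le_refl T⟩
  have hD0 : 0 ≤ D := by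
    obtain ⟨P, hP⟩ := hPsne
    have h1 : (0 : ℝ) ≤ ∫ ω, |Y₁ 0 ω - Y₂ 0 ω| ∂P := integral_nonneg fun ω => abs_nonneg _
    have h2 := le_upperExp (X := fun ω => |Y₁ 0 ω - Y₂ 0 ω|) hP (hYdBdd 0 h0Icc)
    linarith [hD 0 h0Icc]
  have main : ∀ Dε : ℝ, D < Dε → |A₁ t - A₂ t| ≤ (8 * C / c + 6) * Dε := by
    intro Dε hDε
    have hDε0 : 0 < Dε := lt_of_le_of_lt hD0 hDε
    have hE0 : (0 : ℝ) < 2 * C * Dε := mul_pos (mul_pos two_pos hC0) hDε0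
    have hZd : ∀ u ∈ Icc (0 : ℝ) T, ∀ P ∈ Ps, (∫ ω, |Y₁ u ω - Y₂ u ω| ∂P) ≤ Dε :=
      fun u hu P hP => le_trans (le_upperExp hP (hYdBdd u hu)) ((hD u hu).trans hDε.le)
    have habs : ∀ u : ℝ, ∀ P : Measure Ω,
        (∫ ω, |Y₂ u ω - Y₁ u ω| ∂P) = ∫ ω, |Y₁ u ω - Y₂ u ω| ∂P :=
      fun u P => integral_congr_ae (Filter.Eventually.of_forall fun ω => abs_sub_comm _ _)
    have he : ∀ u ∈ Icc (0 : ℝ) T,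
        |upperExp Ps (Y₁ u) - upperExp Ps (Y₂ u)| ≤ Dε := by
      intro u hu
      have h12 : upperExp Ps (Y₁ u) ≤ upperExp Ps (Y₂ u) + Dε := by
        apply upperExp_le hPsne
        intro P hP
        obtain ⟨hi1, hi2⟩ := hYint u hu P hP
        have h3 : (∫ ω, Y₁ u ω ∂P) - ∫ ω, Y₂ u ω ∂P ≤ ∫ ω, |Y₁ u ω - Y₂ u ω| ∂P := by
          rw [← integral_sub hi1 hi2]
          exact integral_mono (hi1.sub hi2) (hi1.sub hi2).abs fun ω => le_abs_self _
        have h4 := le_upperExp hP (hYbdd u hu).2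
        linarith [hZd u hu P hP]
      have h21 : upperExp Ps (Y₂ u) ≤ upperExp Ps (Y₁ u) + Dε := by
        apply upperExp_le hPsne
        intro P hP
        obtain ⟨hi1, hi2⟩ := hYint u hu P hP
        have h3 : (∫ ω, Y₂ u ω ∂P) - ∫ ω, Y₁ u ω ∂P ≤ ∫ ω, |Y₂ u ω - Y₁ u ω| ∂P := by
          rw [← integral_sub hi2 hi1]
          exact integral_mono (hi2.sub hi1) (hi2.sub hi1).abs fun ω => le_abs_self _
        have h4 := le_upperExp hP (hYbdd u hu).1
        rw [habs u P] at h3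
        linarith [hZd u hu P hP]
      rw [abs_le]
      constructor <;> linarith
    -- the honest pair bound, for either boundary generator
    have hpairgen : ∀ G : Ω → ℝ → ℝ → ℝ,
        (∀ ω : Ω, ∀ u ∈ Icc (0 : ℝ) T, ∀ x y : ℝ, |G ω u x - G ω u y| ≤ C * |x - y|) →
        ∀ u ∈ Icc (0 : ℝ) T, ∀ y : ℝ, ∀ P ∈ Ps,
        Integrable (fun ω => G ω u (Y₁ u ω - upperExp Ps (Y₁ u) + y)) P →
        Integrable (fun ω => G ω u (Y₂ u ω - upperExp Ps (Y₂ u) + y)) P →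
        |(∫ ω, G ω u (Y₂ u ω - upperExp Ps (Y₂ u) + y) ∂P)
          - ∫ ω, G ω u (Y₁ u ω - upperExp Ps (Y₁ u) + y) ∂P| ≤ 2 * C * Dε := by
      intro G hG u hu y P hP hI1 hI2
      haveI := hPsprob P hP
      have hflip : ∀ ω, |G ω u (Y₂ u ω - upperExp Ps (Y₂ u) + y)
          - G ω u (Y₁ u ω - upperExp Ps (Y₁ u) + y)|
          ≤ C * (|Y₁ u ω - Y₂ u ω| + Dε) := by
        intro ω
        have h1 := hG ω u hu (Y₂ u ω - upperExp Ps (Y₂ u) + y)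
          (Y₁ u ω - upperExp Ps (Y₁ u) + y)
        have h2 : |(Y₂ u ω - upperExp Ps (Y₂ u) + y) - (Y₁ u ω - upperExp Ps (Y₁ u) + y)|
            ≤ |Y₁ u ω - Y₂ u ω| + Dε := by
          have h4 : (Y₂ u ω - upperExp Ps (Y₂ u) + y) - (Y₁ u ω - upperExp Ps (Y₁ u) + y)
              = -((Y₁ u ω - Y₂ u ω) - (upperExp Ps (Y₁ u) - upperExp Ps (Y₂ u))) := by ring
          rw [h4, abs_neg]
          have h5 : |(Y₁ u ω - Y₂ u ω) - (upperExp Ps (Y₁ u) - upperExp Ps (Y₂ u))|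
              ≤ |Y₁ u ω - Y₂ u ω| + |upperExp Ps (Y₁ u) - upperExp Ps (Y₂ u)| := by
            have h6 := abs_add_le (Y₁ u ω - Y₂ u ω)
              (-(upperExp Ps (Y₁ u) - upperExp Ps (Y₂ u)))
            rw [abs_neg] at h6
            simpa [sub_eq_add_neg] using h6
          linarith [he u hu]
        calc |G ω u (Y₂ u ω - upperExp Ps (Y₂ u) + y)
            - G ω u (Y₁ u ω - upperExp Ps (Y₁ u) + y)|
            ≤ C * |(Y₂ u ω - upperExp Ps (Y₂ u) + y) - (Y₁ u ω - upperExp Ps (Y₁ u) + y)| := h1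
          _ ≤ C * (|Y₁ u ω - Y₂ u ω| + Dε) := mul_le_mul_of_nonneg_left h2 hC0.le
      have hb := pair_bound P hC0.le (hYint u hu P hP).1 (hYint u hu P hP).2
        (hZd u hu P hP) hflip hI1 hI2
      calc |(∫ ω, G ω u (Y₂ u ω - upperExp Ps (Y₂ u) + y) ∂P)
          - ∫ ω, G ω u (Y₁ u ω - upperExp Ps (Y₁ u) + y) ∂P| ≤ C * (Dε + Dε) := hb
        _ = 2 * C * Dε := by ring
    -- the four cross lemma instances
    have hCLr12 : ∀ u ∈ Icc (0 : ℝ) T, ∀ y : ℝ,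
        0 < r₂ u y → r₁ u y + 2 * C * Dε < r₂ u y → 0 ≤ r₁ u y := by
      intro u hu y h2 h12
      rw [hr₁ u y] at h12 ⊢
      rw [hr₂ u y] at h2 h12
      exact cross_lemma hPsne _ _ _ (hbR₁ u y)
        (fun P hP hI1 hI2 => (abs_le.1 (hpairgen R hR u hu y P hP hI1 hI2)).2) h2 h12
    have hCLl12 : ∀ u ∈ Icc (0 : ℝ) T, ∀ y : ℝ,
        0 < l₂ u y → l₁ u y + 2 * C * Dε < l₂ u y → 0 ≤ l₁ u y := by
      intro u hu y h2 h12
      rw [hl₁ u y] at h12 ⊢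
      rw [hl₂ u y] at h2 h12
      exact cross_lemma hPsne _ _ _ (hbL₁ u y)
        (fun P hP hI1 hI2 => (abs_le.1 (hpairgen L hL u hu y P hP hI1 hI2)).2) h2 h12
    have hCLr21 : ∀ u ∈ Icc (0 : ℝ) T, ∀ y : ℝ,
        0 < r₁ u y → r₂ u y + 2 * C * Dε < r₁ u y → 0 ≤ r₂ u y := by
      intro u hu y h2 h12
      rw [hr₂ u y] at h12 ⊢
      rw [hr₁ u y] at h2 h12
      refine cross_lemma hPsne _ _ _ (hbR₂ u y) ?_ h2 h12
      intro P hP hI2 hI1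
      have h3 := (abs_le.1 (hpairgen R hR u hu y P hP hI1 hI2)).1
      linarith
    have hCLl21 : ∀ u ∈ Icc (0 : ℝ) T, ∀ y : ℝ,
        0 < l₁ u y → l₂ u y + 2 * C * Dε < l₁ u y → 0 ≤ l₂ u y := by
      intro u hu y h2 h12
      rw [hl₂ u y] at h12 ⊢
      rw [hl₁ u y] at h2 h12
      refine cross_lemma hPsne _ _ _ (hbL₂ u y) ?_ h2 h12
      intro P hP hI2 hI1
      have h3 := (abs_le.1 (hpairgen L hL u hu y P hP hI1 hI2)).1
      linarith
    -- monotone Lipschitz lower bounds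
    have hl₁m : ∀ u ∈ Icc (0 : ℝ) T, ∀ x y : ℝ, x ≤ y → c * (y - x) ≤ l₁ u y - l₁ u x :=
      fun u hu x y hxy =>
        lip_lower_mono hA₁.l_mono (fun v hv p q => (hA₁.l_lip v hv p q).1) hu hxy
    have hr₁m : ∀ u ∈ Icc (0 : ℝ) T, ∀ x y : ℝ, x ≤ y → c * (y - x) ≤ r₁ u y - r₁ u x :=
      fun u hu x y hxy =>
        lip_lower_mono hA₁.r_mono (fun v hv p q => (hA₁.r_lip v hv p q).1) hu hxy
    have hl₂m : ∀ u ∈ Icc (0 : ℝ) T, ∀ x y : ℝ, x ≤ y → c * (y - x) ≤ l₂ u y - l₂ u x :=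
      fun u hu x y hxy =>
        lip_lower_mono hA₂.l_mono (fun v hv p q => (hA₂.l_lip v hv p q).1) hu hxy
    have hr₂m : ∀ u ∈ Icc (0 : ℝ) T, ∀ x y : ℝ, x ≤ y → c * (y - x) ≤ r₂ u y - r₂ u x :=
      fun u hu x y hxy =>
        lip_lower_mono hA₂.r_mono (fun v hv p q => (hA₂.r_lip v hv p q).1) hu hxy
    -- continuity of the composed boundary processes
    have hcr₁ : ContinuousOn (fun u => r₁ u (x₁ u)) (Icc 0 T) :=
      contOn_comp_s12 hA₁.r_cont (fun u hu p q => (hA₁.r_lip u hu p q).2) hsol₁.x_cont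
    have hcl₁ : ContinuousOn (fun u => l₁ u (x₁ u)) (Icc 0 T) :=
      contOn_comp_s12 hA₁.l_cont (fun u hu p q => (hA₁.l_lip u hu p q).2) hsol₁.x_cont
    have hcr₂ : ContinuousOn (fun u => r₂ u (x₂ u)) (Icc 0 T) :=
      contOn_comp_s12 hA₂.r_cont (fun u hu p q => (hA₂.r_lip u hu p q).2) hsol₂.x_cont
    have hcl₂ : ContinuousOn (fun u => l₂ u (x₂ u)) (Icc 0 T) :=
      contOn_comp_s12 hA₂.l_cont (fun u hu p q => (hA₂.l_lip u hu p q).2) hsol₂.x_cont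
    -- the free parts are `Dε`-close
    have hv12 : ∀ u ∈ Icc (0 : ℝ) T,
        |(a₁ + s₁ T - s₁ u) - (a₂ + s₂ T - s₂ u)| ≤ Dε := by
      intro u hu
      have h1 : (a₁ + s₁ T - s₁ u) - (a₂ + s₂ T - s₂ u)
          = upperExp Ps (Y₁ u) - upperExp Ps (Y₂ u) := by
        rw [ha₁, ha₂, hs₁ u, hs₁ T, hs₂ u, hs₂ T]; ring
      rw [h1]
      exact he u hu
    have hv21 : ∀ u ∈ Icc (0 : ℝ) T,
        |(a₂ + s₂ T - s₂ u) - (a₁ + s₁ T - s₁ u)| ≤ Dε := by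
      intro u hu
      rw [abs_sub_comm]
      exact hv12 u hu
    have hdB : Dε ≤ 2 * (2 * C * Dε) / c := by
      rw [le_div_iff₀ hc]
      nlinarith [mul_pos hDε0 (show (0 : ℝ) < 4 * C - c by linarith)]
    have hub := key_half T c (2 * C * Dε) Dε hc hE0 hdB
      l₁ r₁ l₂ r₂ s₁ s₂ a₁ a₂ x₁ A₁ x₂ A₂ hsol₁ hsol₂ hl₁m hr₁m hl₂m hr₂m
      hCLr12 hCLl12 hcr₁ hcl₂ hv12
    have hlb := key_half T c (2 * C * Dε) Dε hc hE0 hdB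
      l₂ r₂ l₁ r₁ s₂ s₁ a₂ a₁ x₂ A₂ x₁ A₁ hsol₂ hsol₁ hl₂m hr₂m hl₁m hr₁m
      hCLr21 hCLl21 hcr₂ hcl₁ hv21
    have hxb0 := hub 0 h0Icc
    have hxb0' := hlb 0 h0Icc
    have hxbt := hub t ht
    have hxbt' := hlb t ht
    have hA1 : A₁ t = (x₁ 0 - x₁ t) + (s₁ 0 - s₁ t) := by
      have e0 := hsol₁.eqn 0 h0Icc
      have et := hsol₁.eqn t ht
      have hz := hsol₁.k_zero
      linarith
    have hA2 : A₂ t = (x₂ 0 - x₂ t) + (s₂ 0 - s₂ t) := by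
      have e0 := hsol₂.eqn 0 h0Icc
      have et := hsol₂.eqn t ht
      have hz := hsol₂.k_zero
      linarith
    have hs10 : s₁ 0 = 0 := by rw [hs₁ 0]; ring
    have hs20 : s₂ 0 = 0 := by rw [hs₂ 0]; ring
    have hst : s₁ t - s₂ t = (upperExp Ps (Y₁ 0) - upperExp Ps (Y₂ 0))
        - (upperExp Ps (Y₁ t) - upperExp Ps (Y₂ t)) := by
      rw [hs₁ t, hs₂ t]; ring
    have he0 := abs_le.1 (he 0 h0Icc)
    have het := abs_le.1 (he t ht)
    have hKval : (8 * C / c + 6) * Dε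
        = 2 * (2 * (2 * C * Dε) / c + 2 * Dε) + 2 * Dε := by
      field_simp
      ring
    rw [abs_le, hKval]
    constructor <;> linarith [he0.1, he0.2, het.1, het.2]
  by_contra hfin
  push_neg at hfin
  have hK0 : (0 : ℝ) < 8 * C / c + 6 := by positivity
  have hg0 : 0 < |A₁ t - A₂ t| - (8 * C / c + 6) * D := by linarith
  have hstep := main (D + (|A₁ t - A₂ t| - (8 * C / c + 6) * D) / (2 * (8 * C / c + 6)))
    (lt_add_of_pos_right D (div_pos hg0 (by linarith)))
  have hKne : (8 * C / c + 6) ≠ 0 := ne_of_gt hK0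
  have hval : (8 * C / c + 6) * (D + (|A₁ t - A₂ t| - (8 * C / c + 6) * D)
      / (2 * (8 * C / c + 6)))
      = (8 * C / c + 6) * D + (|A₁ t - A₂ t| - (8 * C / c + 6) * D) / 2 := by
    field_simp
  rw [hval] at hstep
  linarith
end

section
/- Let T > 0, K > 0, M > 0, and let ρ : [0,∞) → [0,∞) be continuous, nondecreasing and concave with ρ(0) = 0, ρ(u) > 0 for u > 0, and ∫_0^ε du/ρ(u) = +∞ for every ε > 0. For integers n ≥ 0 and m ≥ 1, let u_{n,m} : [0,T] → [0,M] be Borel measurable functions such that for all n ≥ 1, m ≥ 1 and t ∈ [0,T], u_{n,m}(t) ≤ K ∫_t^T ρ(u_{n−1,m}(s)) ds. Then lim_{n→∞} sup_{m≥1} sup_{t∈[0,T]} u_{n,m}(t) = 0. -/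
open MeasureTheory Set
open scoped ENNReal
open Filter
open scoped Topology

set_option maxHeartbeats 1000000

lemma aux_ii {g : ℝ → ℝ} (hg : Measurable g) {C : ℝ} (hbd : ∀ s, |g s| ≤ C) (a b : ℝ) :
    IntervalIntegrable g volume a b := by
  rw [intervalIntegrable_iff]
  exact Measure.integrableOn_of_bounded (measure_Ioc_lt_top).ne hg.aestronglyMeasurable
    (ae_of_all _ fun s => hbd s)

lemma osgood_aux (T K M : ℝ) (hT : 0 < T) (hK : 0 < K) (hM : 0 < M)
    (ρ' : ℝ → ℝ) (hc : Continuous ρ') (hm : Monotone ρ') (h0 : ρ' 0 = 0)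
    (hpos : ∀ x : ℝ, 0 < x → 0 < ρ' x) (h2 : ∀ x : ℝ, 0 ≤ x → ρ' (2*x) ≤ 2 * ρ' x)
    (hnn : ∀ x : ℝ, 0 ≤ ρ' x)
    (hOs : ∀ ε : ℝ, 0 < ε → (∫⁻ u in Ioc (0:ℝ) ε, ENNReal.ofReal (ρ' u)⁻¹) = ∞)
    (W : ℝ → ℝ) (hWm : Measurable W) (hW0 : ∀ t, 0 ≤ W t) (hWM : ∀ t, W t ≤ M)
    (hineq : ∀ t ∈ Icc (0:ℝ) T, W t ≤ K * ∫ s in t..T, ρ' (W s)) :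
    ∀ t ∈ Icc (0:ℝ) T, W t = 0 := by
  have hρ'nonneg : ∀ x, 0 ≤ ρ' x := hnn
  set F : ℝ → ℝ := fun t => K * ∫ s in t..T, ρ' (W s) with hF
  have hint : ∀ a b : ℝ, IntervalIntegrable (fun s => ρ' (W s)) volume a b := by
    refine aux_ii (hc.measurable.comp hWm) (C := ρ' M) (fun s => ?_)
    rw [abs_of_nonneg (hρ'nonneg _)]
    exact hm (hWM s)
  have hFsub : ∀ a b : ℝ, F a - F b = K * ∫ s in a..b, ρ' (W s) := by
    intro a b
    have h := intervalIntegral.integral_add_adjacent_intervals (hint a b) (hint b T)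
    simp only [hF]
    rw [← h]; ring
  have hFanti : Antitone F := by
    intro a b hab
    have h1 : 0 ≤ F a - F b := by
      rw [hFsub]
      have : 0 ≤ ∫ s in a..b, ρ' (W s) :=
        intervalIntegral.integral_nonneg hab (fun s _ => hρ'nonneg _)
      positivity
    linarith
  have hFcont : Continuous F := by
    have h1 : Continuous (fun t => ∫ s in T..t, ρ' (W s)) :=
      intervalIntegral.continuous_primitive hint T
    have : F = fun t => K * (-(∫ s in T..t, ρ' (W s))) := by
      funext t; rw [hF]; rw [intervalIntegral.integral_symm]; ring
    rw [this]
    exact continuous_const.mul h1.neg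
  have hFT : F T = 0 := by simp [hF]
  -- main claim
  have hF0 : F 0 ≤ 0 := by
    by_contra hF0
    push_neg at hF0
    -- step
    have step : ∀ a : ℝ, a ∈ Icc 0 T → 0 < F a → ∃ b, a ≤ b ∧ b ≤ T ∧ F b = F a / 2 := by
      intro a ha hFa
      have h1 : F a / 2 ∈ Icc (F T) (F a) := by
        constructor
        · rw [hFT]; linarith
        · linarith
      obtain ⟨b, hb, hFb⟩ := intermediate_value_Icc' ha.2 hFcont.continuousOn h1
      exact ⟨b, hb.1, hb.2, hFb⟩
    -- sequence
    set tt : ℕ → ℝ := fun n => Nat.rec 0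
      (fun _ a => if h : a ∈ Icc 0 T ∧ 0 < F a then Classical.choose (step a h.1 h.2) else a) n
      with htt
    have htt0 : tt 0 = 0 := rfl
    have htts : ∀ n, tt (n+1) = if h : tt n ∈ Icc 0 T ∧ 0 < F (tt n) then
        Classical.choose (step (tt n) h.1 h.2) else tt n := fun n => rfl
    have hP : ∀ n, tt n ∈ Icc 0 T ∧ F (tt n) = F 0 / 2^n := by
      intro n
      induction n with
      | zero => exact ⟨⟨le_refl 0, hT.le⟩, by simp [htt0]⟩
      | succ n ih =>
        have hcond : tt n ∈ Icc 0 T ∧ 0 < F (tt n) := by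
          refine ⟨ih.1, ?_⟩
          rw [ih.2]; positivity
        have hspec := Classical.choose_spec (step (tt n) hcond.1 hcond.2)
        rw [htts n, dif_pos hcond]
        refine ⟨⟨le_trans ih.1.1 hspec.1, hspec.2.1⟩, ?_⟩
        rw [hspec.2.2, ih.2]; ring
    have httmono : ∀ n, tt n ≤ tt (n+1) := by
      intro n
      have hcond : tt n ∈ Icc 0 T ∧ 0 < F (tt n) := by
        refine ⟨(hP n).1, ?_⟩
        rw [(hP n).2]; positivity
      have hspec := Classical.choose_spec (step (tt n) hcond.1 hcond.2)
      rw [htts n, dif_pos hcond]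
      exact hspec.1
    -- slab bound
    have slab : ∀ n : ℕ, (∫⁻ u in Ioc (F (tt (n+1))) (F (tt n)), ENNReal.ofReal (ρ' u)⁻¹)
        ≤ ENNReal.ofReal (2*K*(tt (n+1) - tt n)) := by
      intro n
      set a := tt n
      set b := tt (n+1)
      have hab : a ≤ b := httmono n
      have hFa : F a = F 0 / 2^n := (hP n).2
      have hFb : F b = F 0 / 2^(n+1) := (hP (n+1)).2
      have hxpos : 0 < F b := by rw [hFb]; positivity
      have hxy : F a = 2 * F b := by rw [hFa, hFb]; ring
      have hρFb : 0 < ρ' (F b) := hpos _ hxpos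
      -- pointwise bound
      have h1 : (∫⁻ u in Ioc (F b) (F a), ENNReal.ofReal (ρ' u)⁻¹)
          ≤ (∫⁻ _ in Ioc (F b) (F a), ENNReal.ofReal (ρ' (F b))⁻¹) := by
        refine setLIntegral_mono measurable_const (fun u hu => ?_)
        refine ENNReal.ofReal_le_ofReal ?_
        exact inv_anti₀ hρFb (hm hu.1.le)
      have h2' : (∫⁻ _ in Ioc (F b) (F a), ENNReal.ofReal (ρ' (F b))⁻¹)
          = ENNReal.ofReal (ρ' (F b))⁻¹ * ENNReal.ofReal (F a - F b) := by
        rw [setLIntegral_const, Real.volume_Ioc]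
      -- F a - F b ≤ K (b-a) ρ'(F a)
      have h3 : F a - F b ≤ K * ((b - a) * ρ' (F a)) := by
        rw [hFsub a b]
        have hsub : ∀ s ∈ Icc a b, ρ' (W s) ≤ ρ' (F a) := by
          intro s hs
          have hsT : s ∈ Icc 0 T := ⟨le_trans (hP n).1.1 hs.1, le_trans hs.2 (hP (n+1)).1.2⟩
          exact hm (le_trans (hineq s hsT) (hFanti hs.1))
        have := intervalIntegral.integral_mono_on hab (hint a b)
          (intervalIntegrable_const) hsub
        rw [intervalIntegral.integral_const] at this
        have h4 : (∫ s in a..b, ρ' (W s)) ≤ (b - a) * ρ' (F a) := by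
          simpa [smul_eq_mul] using this
        nlinarith [hK.le]
      have h5 : ρ' (F a) ≤ 2 * ρ' (F b) := by
        rw [hxy]; exact h2 _ hxpos.le
      calc (∫⁻ u in Ioc (F b) (F a), ENNReal.ofReal (ρ' u)⁻¹)
          ≤ ENNReal.ofReal (ρ' (F b))⁻¹ * ENNReal.ofReal (F a - F b) := h1.trans h2'.le
        _ ≤ ENNReal.ofReal ((ρ' (F b))⁻¹ * (F a - F b)) := by
            rw [ENNReal.ofReal_mul (by positivity)]
        _ ≤ ENNReal.ofReal (2*K*(b - a)) := by
            refine ENNReal.ofReal_le_ofReal ?_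
            have hba : 0 ≤ b - a := by linarith
            have : F a - F b ≤ K * ((b-a) * (2 * ρ' (F b))) := by
              nlinarith [mul_le_mul_of_nonneg_left h5 (mul_nonneg hK.le hba)]
            rw [inv_mul_le_iff₀ hρFb]
            nlinarith
    -- covering
    have hcover : Ioc (0:ℝ) (F 0) ⊆ ⋃ n : ℕ, Ioc (F (tt (n+1))) (F (tt n)) := by
      intro x hx
      have hex : ∃ n : ℕ, F 0 / 2^(n+1) < x := by
        obtain ⟨n, hn⟩ := pow_unbounded_of_one_lt (F 0 / x) (one_lt_two (α := ℝ))
        refine ⟨n, ?_⟩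
        rw [div_lt_iff₀ (by positivity)]
        rw [div_lt_iff₀ hx.1] at hn
        calc F 0 < 2^n * x := hn
          _ ≤ x * 2^(n+1) := by
              rw [pow_succ]
              nlinarith [hx.1, pow_pos (zero_lt_two (α := ℝ)) n]
      have h1 : F 0 / 2^(Nat.find hex+1) < x := Nat.find_spec hex
      have h2' : x ≤ F 0 / 2^(Nat.find hex) := by
        rcases Nat.eq_zero_or_pos (Nat.find hex) with h | h
        · rw [h]; simpa using hx.2
        · have hlt : Nat.find hex - 1 < Nat.find hex := by omega
          have hmin := Nat.find_min hex hlt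
          push_neg at hmin
          have hsub : Nat.find hex - 1 + 1 = Nat.find hex := by omega
          rw [hsub] at hmin
          exact hmin
      refine mem_iUnion.2 ⟨Nat.find hex, ?_, ?_⟩
      · rw [(hP (Nat.find hex+1)).2]; exact h1
      · rw [(hP (Nat.find hex)).2]; exact h2'
    -- total bound
    have htotal : (∫⁻ u in Ioc (0:ℝ) (F 0), ENNReal.ofReal (ρ' u)⁻¹)
        ≤ ENNReal.ofReal (2*K*T) := by
      calc (∫⁻ u in Ioc (0:ℝ) (F 0), ENNReal.ofReal (ρ' u)⁻¹)
          ≤ (∫⁻ u in ⋃ n : ℕ, Ioc (F (tt (n+1))) (F (tt n)), ENNReal.ofReal (ρ' u)⁻¹) :=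
            lintegral_mono_set hcover
        _ ≤ ∑' n : ℕ, ∫⁻ u in Ioc (F (tt (n+1))) (F (tt n)), ENNReal.ofReal (ρ' u)⁻¹ :=
            lintegral_iUnion_le _ _
        _ ≤ ∑' n : ℕ, ENNReal.ofReal (2*K*(tt (n+1) - tt n)) := ENNReal.tsum_le_tsum slab
        _ ≤ ENNReal.ofReal (2*K*T) := by
            rw [ENNReal.tsum_eq_iSup_nat]
            refine iSup_le fun N => ?_
            rw [← ENNReal.ofReal_sum_of_nonneg (fun i _ =>
              mul_nonneg (by positivity) (by linarith [httmono i]))]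
            refine ENNReal.ofReal_le_ofReal ?_
            have : ∑ i ∈ Finset.range N, 2*K*(tt (i+1) - tt i) = 2*K*(tt N - tt 0) := by
              rw [← Finset.mul_sum, Finset.sum_range_sub]
            rw [this, htt0]
            have := (hP N).1.2
            nlinarith
    rw [hOs (F 0) hF0] at htotal
    exact ENNReal.ofReal_ne_top (top_le_iff.mp htotal)
  intro t ht
  have h1 : W t ≤ F t := hineq t ht
  have h2' : F t ≤ F 0 := hFanti ht.1
  linarith [hW0 t, h1, h2', hF0]

/-- Bihari-type convergence of the Picard scheme: under the
Osgood condition on `ρ`, if the uniformly bounded functions `u_{n,m}` satisfy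
`u_{n,m}(t) ≤ K ∫_t^T ρ(u_{n-1,m}(s)) ds`, then
`sup_{m ≥ 1} sup_{t ∈ [0,T]} u_{n,m}(t) → 0` as `n → ∞`. -/
theorem stmt16 (T K M : ℝ) (hT : 0 < T) (hK : 0 < K) (hM : 0 < M)
    (ρ : ℝ → ℝ)
    (hρc : ContinuousOn ρ (Ici 0)) (hρm : MonotoneOn ρ (Ici 0))
    (hρconc : ConcaveOn ℝ (Ici 0) ρ) (hρ0 : ρ 0 = 0)
    (hρpos : ∀ u : ℝ, 0 < u → 0 < ρ u)
    (hOsgood : ∀ ε : ℝ, 0 < ε →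
      (∫⁻ u in Ioc (0 : ℝ) ε, ENNReal.ofReal (ρ u)⁻¹) = ∞)
    (u : ℕ → ℕ → ℝ → ℝ)
    (hmeas : ∀ n m : ℕ, 1 ≤ m → Measurable (u n m))
    (hrange : ∀ n m : ℕ, 1 ≤ m → ∀ t ∈ Icc (0 : ℝ) T, u n m t ∈ Icc 0 M)
    (hrec : ∀ n m : ℕ, 1 ≤ n → 1 ≤ m → ∀ t ∈ Icc (0 : ℝ) T,
      u n m t ≤ K * ∫ s in t..T, ρ (u (n - 1) m s)) :
    ∀ ε : ℝ, 0 < ε → ∃ N : ℕ, ∀ n ≥ N, ∀ m : ℕ, 1 ≤ m →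
      ∀ t ∈ Icc (0 : ℝ) T, u n m t ≤ ε := by
  intro ε hε
  -- the modified rho
  set ρ' : ℝ → ℝ := fun x => ρ (max x 0) with hρ'def
  have hρ'c : Continuous ρ' :=
    hρc.comp_continuous (continuous_id.max continuous_const) (fun x => le_max_right x 0)
  have hρ'm : Monotone ρ' := fun x y h =>
    hρm (le_max_right x 0) (le_max_right y 0) (max_le_max h le_rfl)
  have hρ'eq : ∀ x : ℝ, 0 ≤ x → ρ' x = ρ x := fun x hx => by
    simp only [hρ'def]; rw [max_eq_left hx]
  have hρ'0 : ρ' 0 = 0 := by rw [hρ'eq 0 le_rfl, hρ0]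
  have hρ'nn : ∀ x, 0 ≤ ρ' x := fun x => by
    rw [← hρ0]
    exact hρm (mem_Ici.2 le_rfl) (mem_Ici.2 (le_max_right x 0)) (le_max_right x 0)
  have hρ'pos : ∀ x : ℝ, 0 < x → 0 < ρ' x := fun x hx => by
    rw [hρ'eq x hx.le]; exact hρpos x hx
  have hρ'2 : ∀ x : ℝ, 0 ≤ x → ρ' (2*x) ≤ 2 * ρ' x := by
    intro x hx
    rw [hρ'eq _ (by positivity), hρ'eq _ hx]
    have h := hρconc.2 (mem_Ici.2 (by positivity : (0:ℝ) ≤ 2*x)) (mem_Ici.2 le_rfl)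
      (by norm_num : (0:ℝ) ≤ 1/2) (by norm_num : (0:ℝ) ≤ 1/2) (by norm_num)
    rw [smul_eq_mul, smul_eq_mul, smul_eq_mul, smul_eq_mul, hρ0] at h
    have heq : (1/2 : ℝ) * (2*x) + 1/2 * 0 = x := by ring
    rw [heq] at h
    linarith
  -- projection onto [0,T]
  set proj : ℝ → ℝ := fun t => max 0 (min t T) with hproj
  have hprojmem : ∀ t, proj t ∈ Icc (0:ℝ) T := fun t =>
    ⟨le_max_left _ _, max_le hT.le (min_le_right t T)⟩
  have hprojeq : ∀ t ∈ Icc (0:ℝ) T, proj t = t := fun t ht => by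
    simp only [hproj]; rw [min_eq_left ht.2, max_eq_right ht.1]
  have hprojmeas : Measurable proj := measurable_const.max (measurable_id.min measurable_const)
  -- the functions f, w
  set f : ℕ → ℝ → ℝ≥0∞ := fun n t => ⨆ m : ℕ, ENNReal.ofReal (u n (m+1) (proj t)) with hfdef
  have hfmeas : ∀ n, Measurable (f n) := fun n =>
    Measurable.iSup fun m =>
      ENNReal.measurable_ofReal.comp ((hmeas n (m+1) (by omega)).comp hprojmeas)
  have hfle : ∀ n t, f n t ≤ ENNReal.ofReal M := fun n t =>
    iSup_le fun m => ENNReal.ofReal_le_ofReal (hrange n (m+1) (by omega) _ (hprojmem t)).2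
  have hfne : ∀ n t, f n t ≠ ∞ := fun n t => ((hfle n t).trans_lt ENNReal.ofReal_lt_top).ne
  set w : ℕ → ℝ → ℝ := fun n t => (f n t).toReal with hwdef
  have hwmeas : ∀ n, Measurable (w n) := fun n => (hfmeas n).ennreal_toReal
  have hw0 : ∀ n t, 0 ≤ w n t := fun n t => ENNReal.toReal_nonneg
  have hwM : ∀ n t, w n t ≤ M := fun n t =>
    ENNReal.toReal_le_of_le_ofReal hM.le (hfle n t)
  have hfw : ∀ n t, f n t = ENNReal.ofReal (w n t) := fun n t =>
    (ENNReal.ofReal_toReal (hfne n t)).symm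
  have hwu : ∀ n m : ℕ, 1 ≤ m → ∀ t ∈ Icc (0:ℝ) T, u n m t ≤ w n t := by
    intro n m hm t ht
    obtain ⟨m', rfl⟩ : ∃ m', m = m'+1 := ⟨m-1, by omega⟩
    have h1 : ENNReal.ofReal (u n (m'+1) t) ≤ f n t := by
      conv_lhs => rw [← hprojeq t ht]
      exact le_iSup (fun m'' => ENNReal.ofReal (u n (m''+1) (proj t))) m'
    calc u n (m'+1) t = (ENNReal.ofReal (u n (m'+1) t)).toReal :=
          (ENNReal.toReal_ofReal (hrange n (m'+1) hm t ht).1).symm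
      _ ≤ w n t := ENNReal.toReal_mono (hfne n t) h1
  -- integrability helper
  have hii : ∀ g : ℝ → ℝ, Measurable g → (∀ s, 0 ≤ g s ∧ g s ≤ M) →
      ∀ a b : ℝ, IntervalIntegrable (fun s => ρ' (g s)) volume a b := by
    intro g hg hb a b
    refine aux_ii (g := fun s => ρ' (g s)) (hρ'c.measurable.comp hg) (C := ρ' M) (fun s => ?_) a b
    rw [abs_of_nonneg (hρ'nn _)]
    exact hρ'm (hb s).2
  -- key estimate
  have key : ∀ n m : ℕ, 1 ≤ n → 1 ≤ m → ∀ t ∈ Icc (0:ℝ) T,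
      u n m t ≤ K * ∫ s in t..T, ρ' (w (n-1) s) := by
    intro n m hn hm t ht
    refine (hrec n m hn hm t ht).trans ?_
    refine mul_le_mul_of_nonneg_left ?_ hK.le
    set ub : ℝ → ℝ := fun s => max 0 (min (u (n-1) m s) M) with hub
    have hubmeas : Measurable ub :=
      measurable_const.max ((hmeas (n-1) m hm).min measurable_const)
    have hubrange : ∀ s, 0 ≤ ub s ∧ ub s ≤ M := fun s =>
      ⟨le_max_left _ _, max_le hM.le (min_le_right _ _)⟩
    have hubeq : ∀ s ∈ Icc (0:ℝ) T, ub s = u (n-1) m s := by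
      intro s hs
      have hr := hrange (n-1) m hm s hs
      simp only [hub]; rw [min_eq_left hr.2, max_eq_right hr.1]
    have hcongr : (∫ s in t..T, ρ (u (n-1) m s)) = ∫ s in t..T, ρ' (ub s) := by
      refine intervalIntegral.integral_congr (fun s hs => ?_)
      rw [uIcc_of_le ht.2] at hs
      have hsT : s ∈ Icc (0:ℝ) T := ⟨le_trans ht.1 hs.1, hs.2⟩
      rw [hubeq s hsT, hρ'eq _ (hrange (n-1) m hm s hsT).1]
    rw [hcongr]
    refine intervalIntegral.integral_mono_on ht.2 (hii ub hubmeas hubrange t T)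
      (hii (w (n-1)) (hwmeas _) (fun s => ⟨hw0 _ _, hwM _ _⟩) t T) (fun s hs => ?_)
    have hsT : s ∈ Icc (0:ℝ) T := ⟨le_trans ht.1 hs.1, hs.2⟩
    rw [hubeq s hsT]
    exact hρ'm (hwu (n-1) m hm s hsT)
  -- recursion for w
  have hwrec : ∀ n : ℕ, 1 ≤ n → ∀ t ∈ Icc (0:ℝ) T,
      w n t ≤ K * ∫ s in t..T, ρ' (w (n-1) s) := by
    intro n hn t ht
    have hRHS : 0 ≤ K * ∫ s in t..T, ρ' (w (n-1) s) :=
      mul_nonneg hK.le (intervalIntegral.integral_nonneg ht.2 fun s _ => hρ'nn _)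
    have hsup : f n t ≤ ENNReal.ofReal (K * ∫ s in t..T, ρ' (w (n-1) s)) := by
      refine iSup_le fun m => ?_
      rw [hprojeq t ht]
      exact ENNReal.ofReal_le_ofReal (key n (m+1) hn (by omega) t ht)
    calc w n t ≤ (ENNReal.ofReal (K * ∫ s in t..T, ρ' (w (n-1) s))).toReal :=
          ENNReal.toReal_mono ENNReal.ofReal_ne_top hsup
      _ = K * ∫ s in t..T, ρ' (w (n-1) s) := ENNReal.toReal_ofReal hRHS
  -- the decreasing envelope
  set g : ℕ → ℝ → ℝ≥0∞ := fun n t => ⨆ k : ℕ, f (n+k) t with hgdef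
  have hgmeas : ∀ n, Measurable (g n) := fun n => Measurable.iSup fun k => hfmeas (n+k)
  have hgle : ∀ n t, g n t ≤ ENNReal.ofReal M := fun n t => iSup_le fun k => hfle _ _
  have hgne : ∀ n t, g n t ≠ ∞ := fun n t => ((hgle n t).trans_lt ENNReal.ofReal_lt_top).ne
  have hganti : ∀ t, Antitone (fun n => g n t) := by
    intro t
    refine antitone_nat_of_succ_le fun n => iSup_le fun k => ?_
    have heq : n+1+k = n+(k+1) := by omega
    rw [heq]
    exact le_iSup (fun k' => f (n+k') t) (k+1)
  set v : ℕ → ℝ → ℝ := fun n t => (g n t).toReal with hvdef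
  have hvmeas : ∀ n, Measurable (v n) := fun n => (hgmeas n).ennreal_toReal
  have hv0 : ∀ n t, 0 ≤ v n t := fun n t => ENNReal.toReal_nonneg
  have hvM : ∀ n t, v n t ≤ M := fun n t => ENNReal.toReal_le_of_le_ofReal hM.le (hgle n t)
  set We : ℝ → ℝ≥0∞ := fun t => ⨅ n, g n t with hWedef
  have hWene : ∀ t, We t ≠ ∞ := fun t =>
    ((iInf_le_of_le 0 (hgle 0 t)).trans_lt ENNReal.ofReal_lt_top).ne
  set W : ℝ → ℝ := fun t => (We t).toReal with hWdef
  have hWmeas : Measurable W := (Measurable.iInf fun n => hgmeas n).ennreal_toReal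
  have hW0 : ∀ t, 0 ≤ W t := fun t => ENNReal.toReal_nonneg
  have hWM : ∀ t, W t ≤ M := fun t =>
    ENNReal.toReal_le_of_le_ofReal hM.le ((iInf_le_of_le 0 (hgle 0 t)))
  have hwv : ∀ n t, w n t ≤ v n t := by
    intro n t
    refine ENNReal.toReal_mono (hgne n t) ?_
    have : f n t = f (n+0) t := by norm_num
    rw [this]
    exact le_iSup (fun k => f (n+k) t) 0
  have hvtend : ∀ t, Tendsto (fun n => v n t) atTop (𝓝 (W t)) := by
    intro t
    have h1 : Tendsto (fun n => g n t) atTop (𝓝 (We t)) := tendsto_atTop_iInf (hganti t)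
    exact (ENNReal.tendsto_toReal (hWene t)).comp h1
  -- recursion for v
  have hvrec : ∀ n : ℕ, 1 ≤ n → ∀ t ∈ Icc (0:ℝ) T,
      v n t ≤ K * ∫ s in t..T, ρ' (v (n-1) s) := by
    intro n hn t ht
    have hRHS : 0 ≤ K * ∫ s in t..T, ρ' (v (n-1) s) :=
      mul_nonneg hK.le (intervalIntegral.integral_nonneg ht.2 fun s _ => hρ'nn _)
    have hsup : g n t ≤ ENNReal.ofReal (K * ∫ s in t..T, ρ' (v (n-1) s)) := by
      refine iSup_le fun k => ?_
      rw [hfw (n+k) t]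
      refine ENNReal.ofReal_le_ofReal ?_
      have h1 : w (n+k) t ≤ K * ∫ s in t..T, ρ' (w (n+k-1) s) :=
        hwrec (n+k) (by omega) t ht
      refine h1.trans (mul_le_mul_of_nonneg_left ?_ hK.le)
      refine intervalIntegral.integral_mono_on ht.2
        (hii _ (hwmeas _) (fun s => ⟨hw0 _ _, hwM _ _⟩) t T)
        (hii _ (hvmeas _) (fun s => ⟨hv0 _ _, hvM _ _⟩) t T) (fun s _ => ?_)
      refine hρ'm ?_
      have heq : n+k-1 = (n-1)+k := by omega
      rw [heq]
      exact ENNReal.toReal_mono (hgne (n-1) s) (le_iSup (fun k' => f ((n-1)+k') s) k)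
    calc v n t ≤ (ENNReal.ofReal (K * ∫ s in t..T, ρ' (v (n-1) s))).toReal :=
          ENNReal.toReal_mono ENNReal.ofReal_ne_top hsup
      _ = K * ∫ s in t..T, ρ' (v (n-1) s) := ENNReal.toReal_ofReal hRHS
  -- limit inequality for W
  have hWrec : ∀ t ∈ Icc (0:ℝ) T, W t ≤ K * ∫ s in t..T, ρ' (W s) := by
    intro t ht
    have hlim : Tendsto (fun n => K * ∫ s in t..T, ρ' (v n s)) atTop
        (𝓝 (K * ∫ s in t..T, ρ' (W s))) := by
      refine Tendsto.const_mul K ?_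
      refine intervalIntegral.tendsto_integral_filter_of_dominated_convergence
        (F := fun n s => ρ' (v n s)) (f := fun s => ρ' (W s)) (μ := volume) (a := t) (b := T)
        (fun _ => ρ' M) ?_ ?_ ?_ ?_
      · exact Eventually.of_forall fun n =>
          ((hρ'c.measurable.comp (hvmeas n)).aestronglyMeasurable).restrict
      · refine Eventually.of_forall fun n => ae_of_all _ fun x _ => ?_
        rw [Real.norm_eq_abs, abs_of_nonneg (hρ'nn _)]
        exact hρ'm (hvM n x)
      · exact intervalIntegrable_const
      · exact ae_of_all _ fun x _ => (hρ'c.tendsto (W x)).comp (hvtend x)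
    have hlim2 : Tendsto (fun n => v (n+1) t) atTop (𝓝 (W t)) :=
      (hvtend t).comp (tendsto_add_atTop_nat 1)
    refine le_of_tendsto_of_tendsto' hlim2 hlim fun n => ?_
    have h1 := hvrec (n+1) (by omega) t ht
    simpa using h1
  -- Osgood gives W = 0
  have hOs' : ∀ ε' : ℝ, 0 < ε' → (∫⁻ x in Ioc (0:ℝ) ε', ENNReal.ofReal (ρ' x)⁻¹) = ∞ := by
    intro ε' hε'
    rw [← hOsgood ε' hε']
    refine setLIntegral_congr_fun measurableSet_Ioc (fun x hx => ?_)
    rw [hρ'eq x hx.1.le]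
  have hWzero : ∀ t ∈ Icc (0:ℝ) T, W t = 0 :=
    osgood_aux T K M hT hK hM ρ' hρ'c hρ'm hρ'0 hρ'pos hρ'2 hρ'nn hOs' W hWmeas hW0 hWM hWrec
  -- w tends to zero pointwise on [0,T]
  have hwtend : ∀ s ∈ Icc (0:ℝ) T, Tendsto (fun n => w n s) atTop (𝓝 0) := by
    intro s hs
    have h1 := hvtend s
    rw [hWzero s hs] at h1
    exact squeeze_zero (fun n => hw0 n s) (fun n => hwv n s) h1
  -- the integrals tend to zero
  have hctend : Tendsto (fun n => ∫ s in (0:ℝ)..T, ρ' (w n s)) atTop (𝓝 0) := by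
    have hmain : Tendsto (fun n => ∫ s in (0:ℝ)..T, ρ' (w n s)) atTop
        (𝓝 (∫ _ in (0:ℝ)..T, (0:ℝ))) := by
      refine intervalIntegral.tendsto_integral_filter_of_dominated_convergence
        (F := fun n s => ρ' (w n s)) (f := fun _ => (0:ℝ)) (μ := volume) (a := (0:ℝ)) (b := T) (l := atTop)
        (fun _ => ρ' M) ?_ ?_ ?_ ?_
      · exact Eventually.of_forall fun n =>
          ((hρ'c.measurable.comp (hwmeas n)).aestronglyMeasurable).restrict
      · refine Eventually.of_forall fun n => ae_of_all _ fun x _ => ?_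
        rw [Real.norm_eq_abs, abs_of_nonneg (hρ'nn _)]
        exact hρ'm (hwM n x)
      · exact intervalIntegrable_const
      · refine ae_of_all _ fun x hx => ?_
        rw [uIoc_of_le hT.le] at hx
        have h1 := (hρ'c.tendsto 0).comp (hwtend x ⟨hx.1.le, hx.2⟩)
        rw [hρ'0] at h1
        exact h1
    simpa using hmain
  -- conclusion
  obtain ⟨N₀, hN₀⟩ := (Metric.tendsto_atTop.1 hctend) (ε/K) (by positivity)
  refine ⟨N₀+1, fun n hn m hm t ht => ?_⟩
  have hn1 : 1 ≤ n := by omega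
  refine (key n m hn1 hm t ht).trans ?_
  have hsplit : (∫ s in (0:ℝ)..t, ρ' (w (n-1) s)) + (∫ s in t..T, ρ' (w (n-1) s))
      = ∫ s in (0:ℝ)..T, ρ' (w (n-1) s) :=
    intervalIntegral.integral_add_adjacent_intervals
      (hii _ (hwmeas _) (fun s => ⟨hw0 _ _, hwM _ _⟩) 0 t)
      (hii _ (hwmeas _) (fun s => ⟨hw0 _ _, hwM _ _⟩) t T)
  have h2 : (∫ s in t..T, ρ' (w (n-1) s)) ≤ ∫ s in (0:ℝ)..T, ρ' (w (n-1) s) := by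
    rw [← hsplit]
    have h3 : 0 ≤ ∫ s in (0:ℝ)..t, ρ' (w (n-1) s) :=
      intervalIntegral.integral_nonneg ht.1 fun s _ => hρ'nn _
    linarith
  have h3 := hN₀ (n-1) (by omega)
  rw [Real.dist_eq, sub_zero] at h3
  have h4 : (∫ s in (0:ℝ)..T, ρ' (w (n-1) s)) ≤ ε / K := (le_abs_self _).trans h3.le
  calc K * ∫ s in t..T, ρ' (w (n-1) s) ≤ K * (ε/K) :=
        mul_le_mul_of_nonneg_left (h2.trans h4) hK.le
    _ = ε := by field_simp
end
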